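/- arXiv:1010.0755 — 2 statements merged into one kernel-verified Lean document; each statement's English description precedes it below -/
import Mathlib

section
/- Let Q, R ∈ 𝒟 and r ≥ n. Then for the weighted paraproduct Π^μ = Π^μ_𝕊 and all weighted Haar functions h^μ_Q, h^ν_R: (1) if ℓ(R) ≥ 2^{−r}ℓ(Q) then ⟨Π^μ h^μ_Q, h^ν_R⟩_ν = 0; (2) if R ⊄ Q then ⟨Π^μ h^μ_Q, h^ν_R⟩_ν = 0; (3) if ℓ(R) < 2^{−r}ℓ(Q) then ⟨Π^μ h^μ_Q, h^ν_R⟩_ν = ⟨𝕊_μ h^μ_Q, h^ν_R⟩_ν, and in particular both sides vanish when R ⊄ Q. -/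
open MeasureTheory Set
open scoped ENNReal NNReal Classical

noncomputable section

/-- The translation parameter space `Ω = ({0,1}^d)^ℤ` for random dyadic lattices. -/
abbrev TransParam (d : ℕ) := ℤ → Fin d → Bool

/-- A dyadic cube: scale `k` (side length `2^k`) and integer position `m`. -/
structure DyadicCube (d : ℕ) where
  k : ℤ
  m : Fin d → ℤ

namespace DyadicCube

variable {d : ℕ}

/-- The translation vector `Σ_{j<k} ω_j 2^j` of the lattice `𝒟_ω` at generation `k`. -/
def shiftVec (ω : TransParam d) (k : ℤ) (i : Fin d) : ℝ :=
  ∑' j : {j : ℤ // j < k}, if ω j.1 i then (2:ℝ) ^ (j.1 : ℤ) else 0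

/-- The point set of the cube `Q` in the translated dyadic lattice `𝒟_ω`. -/
def set (ω : TransParam d) (Q : DyadicCube d) : Set (Fin d → ℝ) :=
  {x | ∀ i, (Q.m i : ℝ) * 2 ^ Q.k + shiftVec ω Q.k i ≤ x i ∧
            x i < ((Q.m i : ℝ) + 1) * 2 ^ Q.k + shiftVec ω Q.k i}

/-- Side length `ℓ(Q) = 2^k`. -/
def len (Q : DyadicCube d) : ℝ := 2 ^ Q.k

/-- Volume `|Q| = ℓ(Q)^d`. -/
def vol (Q : DyadicCube d) : ℝ := ((2:ℝ) ^ Q.k) ^ d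

/-- The dyadic cube of generation `k` of `𝒟_ω` containing the point `x`. -/
def cubeAt (ω : TransParam d) (k : ℤ) (x : Fin d → ℝ) : DyadicCube d :=
  ⟨k, fun i => ⌊(x i - shiftVec ω k i) / 2 ^ k⌋⟩

/-- The average of `f` on `Q` with respect to `μ` (zero if `μ(Q)` is zero or infinite). -/
def avg (ω : TransParam d) (μ : Measure (Fin d → ℝ)) (Q : DyadicCube d)
    (f : (Fin d → ℝ) → ℝ) : ℝ :=
  ((μ (Q.set ω)).toReal)⁻¹ * ∫ x in Q.set ω, f x ∂μ

/-- The conditional expectation `E^μ_Q f`. -/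
def eproj (ω : TransParam d) (μ : Measure (Fin d → ℝ)) (Q : DyadicCube d)
    (f : (Fin d → ℝ) → ℝ) : (Fin d → ℝ) → ℝ :=
  fun x => if x ∈ Q.set ω then avg ω μ Q f else 0

/-- The martingale difference `Δ^μ_Q f = -E^μ_Q f + Σ_{J ∈ ch(Q)} E^μ_J f`. -/
def mdiff (ω : TransParam d) (μ : Measure (Fin d → ℝ)) (Q : DyadicCube d)
    (f : (Fin d → ℝ) → ℝ) : (Fin d → ℝ) → ℝ :=
  fun x => if x ∈ Q.set ω then
      avg ω μ (cubeAt ω (Q.k - 1) x) f - avg ω μ Q f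
    else 0

end DyadicCube

/-- `h` takes equal values at points lying in the same generation-`k` cube of `𝒟_ω`. -/
def ConstOnScale {d : ℕ} (ω : TransParam d) (k : ℤ) (h : (Fin d → ℝ) → ℝ) : Prop :=
  ∀ x y : Fin d → ℝ, DyadicCube.cubeAt ω k x = DyadicCube.cubeAt ω k y → h x = h y

/-- A generalized Haar function for `Q`: supported on `Q` and constant on the children of `Q`. -/
def IsGenHaar {d : ℕ} (ω : TransParam d) (Q : DyadicCube d) (h : (Fin d → ℝ) → ℝ) : Prop :=
  (∀ x ∉ Q.set ω, h x = 0) ∧ ConstOnScale ω (Q.k - 1) h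

/-- A `μ`-weighted Haar function for `Q`: an element of the range of `Δ^μ_Q` in `L²(μ)`,
i.e. supported on `Q`, constant on the children of `Q`, with `μ`-mean zero. -/
def IsWeightedHaar {d : ℕ} (ω : TransParam d) (μ : Measure (Fin d → ℝ)) (Q : DyadicCube d)
    (h : (Fin d → ℝ) → ℝ) : Prop :=
  IsGenHaar ω Q h ∧ (∫ x, h x ∂μ) = 0 ∧ MemLp h 2 μ

/-- An elementary generalized dyadic shift with parameters `mm`, `nn` on the lattice `𝒟_ω`:
for each cube `Q` (in `cubes`) and each pair `Q' Q'' ⊆ Q` with `ℓ(Q') = 2^{-mm} ℓ(Q)`,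
`ℓ(Q'') = 2^{-nn} ℓ(Q)`, a pair of generalized Haar functions `h1 Q Q' Q''` (for `Q'`)
and `h2 Q Q' Q''` (for `Q''`) with `‖h1‖_∞ ⬝ ‖h2‖_∞ ≤ 1`. -/
structure ElemShift (d : ℕ) (ω : TransParam d) (mm nn : ℕ) where
  cubes : Set (DyadicCube d)
  h1 : DyadicCube d → DyadicCube d → DyadicCube d → (Fin d → ℝ) → ℝ
  h2 : DyadicCube d → DyadicCube d → DyadicCube d → (Fin d → ℝ) → ℝ
  haar1 : ∀ Q Q' Q'', IsGenHaar ω Q' (h1 Q Q' Q'')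
  haar2 : ∀ Q Q' Q'', IsGenHaar ω Q'' (h2 Q Q' Q'')
  normBound : ∀ Q Q' Q'' x y, |h2 Q Q' Q'' x| * |h1 Q Q' Q'' y| ≤ 1

namespace ElemShift

variable {d : ℕ} {ω : TransParam d} {mm nn : ℕ}

/-- The kernel `a_Q(x,y) = Σ_{Q',Q''} h_{Q''}^{Q'}(x) h_{Q'}^{Q''}(y)` (so `‖a_Q‖_∞ ≤ 1`);
only the pair `Q' ∋ y`, `Q'' ∋ x` of the prescribed generations contributes. -/
def kernelAt (S : ElemShift d ω mm nn) (Q : DyadicCube d) (x y : Fin d → ℝ) : ℝ :=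
  if Q ∈ S.cubes ∧
     (DyadicCube.cubeAt ω (Q.k - mm) y).set ω ⊆ Q.set ω ∧
     (DyadicCube.cubeAt ω (Q.k - nn) x).set ω ⊆ Q.set ω then
    S.h2 Q (DyadicCube.cubeAt ω (Q.k - mm) y) (DyadicCube.cubeAt ω (Q.k - nn) x) x *
      S.h1 Q (DyadicCube.cubeAt ω (Q.k - mm) y) (DyadicCube.cubeAt ω (Q.k - nn) x) y
  else 0

/-- The full kernel `A(x,y) = Σ_Q |Q|⁻¹ a_Q(x,y)`. -/
def kernel (S : ElemShift d ω mm nn) (x y : Fin d → ℝ) : ℝ :=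
  ∑' Q : DyadicCube d, (DyadicCube.vol Q)⁻¹ * S.kernelAt Q x y

/-- `𝕊_μ f (x) = ∫ A(x,y) f(y) dμ(y)`. -/
def op (S : ElemShift d ω mm nn) (μ : Measure (Fin d → ℝ)) (f : (Fin d → ℝ) → ℝ) :
    (Fin d → ℝ) → ℝ :=
  fun x => ∫ y, S.kernel x y * f y ∂μ

/-- `𝕊^*_ν g (y) = ∫ A(x,y) g(x) dν(x)`. -/
def opStar (S : ElemShift d ω mm nn) (ν : Measure (Fin d → ℝ)) (g : (Fin d → ℝ) → ℝ) :
    (Fin d → ℝ) → ℝ :=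
  fun y => ∫ x, S.kernel x y * g x ∂ν

/-- The restricted shift `𝕊_𝒜`, keeping only the cubes in `𝒜`. -/
def opRestr (S : ElemShift d ω mm nn) (𝒜 : Set (DyadicCube d)) (μ : Measure (Fin d → ℝ))
    (f : (Fin d → ℝ) → ℝ) : (Fin d → ℝ) → ℝ :=
  fun x => ∫ y, (∑' Q : DyadicCube d,
    if Q ∈ 𝒜 then (DyadicCube.vol Q)⁻¹ * S.kernelAt Q x y else 0) * f y ∂μ

/-- The shift is ordinary (non-generalized): all its Haar functions have mean zero. -/
def Ordinary (S : ElemShift d ω mm nn) : Prop :=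
  ∀ Q Q' Q'', (∫ x, S.h1 Q Q' Q'' x) = 0 ∧ (∫ x, S.h2 Q Q' Q'' x) = 0

end ElemShift

/-- The axis-parallel cube with corner `c` and side length `ℓ`. -/
def stdCube {d : ℕ} (c : Fin d → ℝ) (ℓ : ℝ) : Set (Fin d → ℝ) :=
  {x | ∀ i, c i ≤ x i ∧ x i < c i + ℓ}

/-- `A` is an `A₂` bound for the weight `w`:
`(|Q|⁻¹∫_Q w)(|Q|⁻¹∫_Q w⁻¹) ≤ A` for all cubes `Q`. -/
def A2BoundOn {d : ℕ} (w : (Fin d → ℝ) → ℝ) (A : ℝ) : Prop :=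
  ∀ (c : Fin d → ℝ) (ℓ : ℝ), 0 < ℓ →
    (∫⁻ x in stdCube c ℓ, ENNReal.ofReal (w x)) *
      (∫⁻ x in stdCube c ℓ, ENNReal.ofReal ((w x)⁻¹)) ≤
      ENNReal.ofReal A * ENNReal.ofReal (ℓ ^ d) * ENNReal.ofReal (ℓ ^ d)

/-- `A` is a joint `A₂` bound for the pair of measures `μ`, `ν`:
`(μ(I)/|I|)(ν(I)/|I|) ≤ A` for all cubes `I`. -/
def JointA2 {d : ℕ} (μ ν : Measure (Fin d → ℝ)) (A : ℝ) : Prop :=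
  ∀ (c : Fin d → ℝ) (ℓ : ℝ), 0 < ℓ →
    μ (stdCube c ℓ) * ν (stdCube c ℓ) ≤
      ENNReal.ofReal A * ENNReal.ofReal (ℓ ^ d) * ENNReal.ofReal (ℓ ^ d)

/-- Distance between two sets. -/
def setDist {α : Type*} [PseudoMetricSpace α] (S T : Set α) : ℝ :=
  sInf ((fun p : α × α => dist p.1 p.2) '' (S ×ˢ T))

/-- The long distance `D(Q,R) = dist(Q,R) + ℓ(Q) + ℓ(R)`. -/
def longDist {d : ℕ} (ω : TransParam d) (Q R : DyadicCube d) : ℝ :=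
  setDist (Q.set ω) (R.set ω) + Q.len + R.len

/-- A cube `Q ∈ 𝒟_ω` is bad (with parameters `r₀`, `γ`) if there is a much bigger cube
`R ∈ 𝒟_ω` with `dist(Q,R) < ℓ(Q)^γ ℓ(R)^{1-γ}`. -/
def IsBad {d : ℕ} (r₀ : ℕ) (γ : ℝ) (ω : TransParam d) (Q : DyadicCube d) : Prop :=
  ∃ R : DyadicCube d, Q.k + (r₀ : ℤ) < R.k ∧
    setDist (Q.set ω) (R.set ω) < Q.len ^ γ * R.len ^ (1 - γ)

/-- `P` is the product over `ℤ` of uniform measures on `{0,1}^d`. -/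
def IsBernoulliProduct {d : ℕ} (P : Measure (TransParam d)) : Prop :=
  IsProbabilityMeasure P ∧
  ∀ (F : Finset (ℤ × Fin d)) (b : ℤ × Fin d → Bool),
    P {ω | ∀ p ∈ F, ω p.1 p.2 = b p} = (1 / 2 : ℝ≥0∞) ^ F.card

/-- A Calderón–Zygmund operator on `ℝ^d` with parameters `Ccz`, `α` and unweighted
`L²` norm at most `normT`. -/
structure CZO (d : ℕ) (Ccz α normT : ℝ) where
  T : ((Fin d → ℝ) → ℝ) →ₗ[ℝ] ((Fin d → ℝ) → ℝ)
  K : (Fin d → ℝ) → (Fin d → ℝ) → ℝ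
  l2bound : ∀ f, eLpNorm (T f) 2 volume ≤ ENNReal.ofReal normT * eLpNorm f 2 volume
  size : ∀ x y, x ≠ y → |K x y| ≤ Ccz / dist x y ^ d
  smooth : ∀ x x' y : Fin d → ℝ, dist x x' < dist x y / 2 →
    |K x y - K x' y| + |K y x - K y x'| ≤ Ccz * dist x x' ^ α / dist x y ^ ((d : ℝ) + α)
  repr : ∀ f : (Fin d → ℝ) → ℝ, Measurable f → HasCompactSupport f →
    (∃ M, ∀ y, |f y| ≤ M) → ∀ x ∉ tsupport f, T f x = ∫ y, K x y * f y


/-- The weighted paraproduct `Π^μ = Π^μ_𝕊 : L²(μ) → L²(ν)`,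
`Π^μ f = Σ_{Q∈𝒟} (E^μ_Q f) Σ_{R ⊆ Q, ℓ(R)=2^{-r}ℓ(Q)} Δ^ν_R 𝕊_μ 1_Q`. -/
def shiftPara {d : ℕ} {ω : TransParam d} {mm nn : ℕ} (S : ElemShift d ω mm nn)
    (μ ν : Measure (Fin d → ℝ)) (r : ℕ) (f : (Fin d → ℝ) → ℝ) : (Fin d → ℝ) → ℝ :=
  fun x => ∑' Q : DyadicCube d,
    DyadicCube.eproj ω μ Q f x *
      DyadicCube.mdiff ω ν (DyadicCube.cubeAt ω (Q.k - r) x)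
        (S.op μ (Set.indicator (Q.set ω) fun _ => (1:ℝ))) x

/-- The density `w(Q)/|Q|` of the weight `w` on the cube `Q`. -/
def dens {d : ℕ} (ω : TransParam d) (w : (Fin d → ℝ) → ℝ) (Q : DyadicCube d) : ℝ :=
  (∫ x in Q.set ω, w x) / Q.vol

/-- The maximal cubes `Q' ∈ 𝒬`, `Q' ⊆ Q`, with `w(Q')/|Q'| > 4 w(Q)/|Q|`:
the stopping children of `Q`. -/
def stopNext {d : ℕ} (ω : TransParam d) (w : (Fin d → ℝ) → ℝ) (𝒬 : Set (DyadicCube d))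
    (Q : DyadicCube d) : Set (DyadicCube d) :=
  {Q' | (Q' ∈ 𝒬 ∧ Q'.set ω ⊆ Q.set ω ∧ 4 * dens ω w Q < dens ω w Q') ∧
    ∀ Q'' : DyadicCube d, Q'' ∈ 𝒬 → Q''.set ω ⊆ Q.set ω → 4 * dens ω w Q < dens ω w Q'' →
      Q'.set ω ⊆ Q''.set ω → Q''.set ω ⊆ Q'.set ω}

/-- The generations of stopping cubes: `𝒢*₀ = {Q₀}`, and `𝒢*_{τ+1}` consists of the
stopping children of the cubes of `𝒢*_τ`. -/
def stopGen {d : ℕ} (ω : TransParam d) (w : (Fin d → ℝ) → ℝ) (𝒬 : Set (DyadicCube d))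
    (Q₀ : DyadicCube d) : ℕ → Set (DyadicCube d)
  | 0 => {Q₀}
  | (τ + 1) => {Q' | ∃ Q ∈ stopGen ω w 𝒬 Q₀ τ, Q' ∈ stopNext ω w 𝒬 Q}

/-- The stopping family `𝒢* = 𝒢*(Q₀) = ∪_τ 𝒢*_τ`. -/
def stopFam {d : ℕ} (ω : TransParam d) (w : (Fin d → ℝ) → ℝ) (𝒬 : Set (DyadicCube d))
    (Q₀ : DyadicCube d) : Set (DyadicCube d) :=
  ⋃ τ : ℕ, stopGen ω w 𝒬 Q₀ τ

/-- `𝒫(R) = 𝒬(R) \ ∪_{R'∈𝒢*, R'⊊R} 𝒬(R')`. -/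
def stopP {d : ℕ} (ω : TransParam d) (w : (Fin d → ℝ) → ℝ) (𝒬 : Set (DyadicCube d))
    (Q₀ R : DyadicCube d) : Set (DyadicCube d) :=
  {Q | Q ∈ 𝒬 ∧ Q.set ω ⊆ R.set ω ∧
    ∀ R' ∈ stopFam ω w 𝒬 Q₀, R'.set ω ⊂ R.set ω → ¬ Q.set ω ⊆ R'.set ω}

/-- The good part `f_{good,ω} = Σ_{I ∈ 𝒟_ω, I good} Δ_I f` of a function. -/
def goodPart {d : ℕ} (r₀ : ℕ) (γ : ℝ) (ω : TransParam d) (f : (Fin d → ℝ) → ℝ) :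
    (Fin d → ℝ) → ℝ :=
  fun x => ∑' k : ℤ,
    if IsBad r₀ γ ω (DyadicCube.cubeAt ω k x) then 0
    else DyadicCube.mdiff ω volume (DyadicCube.cubeAt ω k x) f x

/-- Conditioning: keep the coordinates `ω_j`, `j < k`, from `τ` and take the coordinates
`ω_j`, `j ≥ k`, from `ω`. -/
def splice {d : ℕ} (τ ω : TransParam d) (k : ℤ) : TransParam d :=
  fun j => if j < k then τ j else ω j

/-- The event `A` depends only on the coordinates `ω_j`, `j < k`. -/
def DependsOnPast {d : ℕ} (k : ℤ) (A : Set (TransParam d)) : Prop :=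
  ∀ ω ω' : TransParam d, (∀ j < k, ω j = ω' j) → (ω ∈ A ↔ ω' ∈ A)

/-- `U` is a generalized dyadic shift with parameters `mm`, `nn` on the lattice `𝒟_ω`:
a sum of at most `4^d` elementary generalized dyadic shifts. -/
def IsGenShiftOp {d : ℕ} (ω : TransParam d) (mm nn : ℕ)
    (U : ((Fin d → ℝ) → ℝ) → ((Fin d → ℝ) → ℝ)) : Prop :=
  ∃ L : List (ElemShift d ω mm nn), L.length ≤ 4 ^ d ∧
    ∀ f x, U f x = (L.map fun S => S.op volume f x).sum

/-- `U` is an ordinary (non-generalized) dyadic shift with parameters `mm`, `nn`: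
a sum of at most `4^d` elementary dyadic shifts built from mean-zero Haar functions. -/
def IsOrdShiftOp {d : ℕ} (ω : TransParam d) (mm nn : ℕ)
    (U : ((Fin d → ℝ) → ℝ) → ((Fin d → ℝ) → ℝ)) : Prop :=
  ∃ L : List (ElemShift d ω mm nn), L.length ≤ 4 ^ d ∧ (∀ S ∈ L, S.Ordinary) ∧
    ∀ f x, U f x = (L.map fun S => S.op volume f x).sum

/-- The dyadic paraproduct `Π f = Σ_Q (E_Q f) b_Q` with symbol `b = (b_Q)_Q = (Δ_Q T1)_Q`. -/
def paraOp {d : ℕ} (ω : TransParam d) (b : DyadicCube d → (Fin d → ℝ) → ℝ)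
    (f : (Fin d → ℝ) → ℝ) : (Fin d → ℝ) → ℝ :=
  fun x => ∑' Q : DyadicCube d, DyadicCube.eproj ω volume Q f x * b Q x

/-- The adjoint `Π^*` of the dyadic paraproduct with symbol `b`:
`Π^* f = Σ_Q 1_Q |Q|⁻¹ ∫ f b_Q`. -/
def paraOpAdj {d : ℕ} (ω : TransParam d) (b : DyadicCube d → (Fin d → ℝ) → ℝ)
    (f : (Fin d → ℝ) → ℝ) : (Fin d → ℝ) → ℝ :=
  fun x => ∑' Q : DyadicCube d,
    Set.indicator (Q.set ω) (fun _ => (1:ℝ)) x * (DyadicCube.vol Q)⁻¹ * (∫ y, f y * b Q y)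

/-- `b = (b_Q)_Q` is the family `(Δ_Q T1)_Q` for the operator with adjoint `Tadj`:
each `b_Q` is supported on `Q`, constant on the children of `Q`, has mean zero, and
satisfies the duality relation `⟨b_Q, g⟩ = ⟨1, Tadj Δ_Q g⟩`. -/
def IsParaSymbol {d : ℕ} (ω : TransParam d)
    (Tadj : ((Fin d → ℝ) → ℝ) → ((Fin d → ℝ) → ℝ))
    (b : DyadicCube d → (Fin d → ℝ) → ℝ) : Prop :=
  ∀ Q : DyadicCube d, IsGenHaar ω Q (b Q) ∧ (∫ x, b Q x) = 0 ∧
    ∀ g : (Fin d → ℝ) → ℝ, Measurable g → HasCompactSupport g → (∃ M, ∀ y, |g y| ≤ M) →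
      (∫ x, b Q x * g x) = ∫ x, Tadj (DyadicCube.mdiff ω volume Q g) x

/-- `Tstar` is the adjoint of `T` on (unweighted) `L²`. -/
def IsAdjointPair {d : ℕ} (T Tstar : ((Fin d → ℝ) → ℝ) → ((Fin d → ℝ) → ℝ)) : Prop :=
  ∀ f g : (Fin d → ℝ) → ℝ, MemLp f 2 volume → MemLp g 2 volume →
    (∫ x, T f x * g x) = ∫ x, f x * Tstar g x

/-- `T̃_ω = T - Π^ω_T - (Π^ω_{T*})^*`, where `b` plays the role of `(Δ_Q T1)_Q` and
`bstar` the role of `(Δ_Q T^*1)_Q`. -/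
def tildeOp {d : ℕ} {Ccz α normT : ℝ} (Op : CZO d Ccz α normT) (ω : TransParam d)
    (b bstar : DyadicCube d → (Fin d → ℝ) → ℝ) (f : (Fin d → ℝ) → ℝ) : (Fin d → ℝ) → ℝ :=
  fun x => Op.T f x - paraOp ω b f x - paraOpAdj ω bstar f x


namespace Statement2Aux

open DyadicCube

variable {d : ℕ} {ω : TransParam d}

instance : Countable (DyadicCube d) :=
  Function.Injective.countable (f := fun Q : DyadicCube d => (Q.k, Q.m))
    (fun a b h => by cases a; cases b; simpa using h)

lemma two_zpow_pos (k : ℤ) : (0:ℝ) < 2 ^ k := zpow_pos (by norm_num) k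

lemma floor_div_nat' (a : ℝ) (n : ℕ) (hn : 0 < n) : ⌊a / (n:ℝ)⌋ = ⌊a⌋ / n := by
  have hn' : (0:ℝ) < (n:ℝ) := by exact_mod_cast hn
  have hnz : (0:ℤ) < (n:ℤ) := by exact_mod_cast hn
  have hde := Int.mul_ediv_add_emod ⌊a⌋ (n:ℤ)
  have hm0 : 0 ≤ ⌊a⌋ % (n:ℤ) := Int.emod_nonneg _ (ne_of_gt hnz)
  have hm1 : ⌊a⌋ % (n:ℤ) < n := Int.emod_lt_of_pos _ hnz
  rw [Int.floor_eq_iff]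
  constructor
  · rw [le_div_iff₀ hn']
    have h1 : (((⌊a⌋ / (n:ℤ) : ℤ)) : ℝ) * (n:ℝ) ≤ ((⌊a⌋:ℤ) : ℝ) := by
      exact_mod_cast (by nlinarith : (⌊a⌋ / (n:ℤ)) * (n:ℤ) ≤ ⌊a⌋)
    exact h1.trans (Int.floor_le a)
  · rw [div_lt_iff₀ hn']
    have h2 : (⌊a⌋:ℤ) + 1 ≤ (⌊a⌋ / (n:ℤ) + 1) * (n:ℤ) := by nlinarith
    calc a < (⌊a⌋:ℝ) + 1 := Int.lt_floor_add_one a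
    _ ≤ (((⌊a⌋ / (n:ℤ) + 1) * (n:ℤ) : ℤ) : ℝ) := by exact_mod_cast h2
    _ = (((⌊a⌋ / (n:ℤ) : ℤ) : ℝ) + 1) * (n:ℝ) := by push_cast; ring

lemma summable_shift_piece (k : ℤ) (b : ℤ → Bool) :
    Summable (fun j : {j : ℤ // j < k} => if b j.1 then (2:ℝ) ^ (j.1 : ℤ) else 0) := by
  set f : {j : ℤ // j < k} → ℝ := fun j => if b j.1 then (2:ℝ) ^ (j.1 : ℤ) else 0 with hf
  set i : ℕ → {j : ℤ // j < k} := fun n => ⟨k - 1 - n, by omega⟩ with hi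
  have hinj : Function.Injective i := by
    intro a b' hab
    have := congrArg (fun j => j.1) hab
    simp only [hi] at this
    omega
  have hrange : ∀ x, x ∉ Set.range i → f x = 0 := by
    intro x hx
    exfalso
    apply hx
    refine ⟨(k - 1 - x.1).toNat, ?_⟩
    apply Subtype.ext
    simp only [hi]
    rw [Int.toNat_of_nonneg (by omega : (0:ℤ) ≤ k - 1 - x.1)]
    omega
  rw [← hinj.summable_iff hrange]
  have hs : Summable (fun n : ℕ => (2:ℝ) ^ (k-1:ℤ) * (1/2) ^ n) :=
    (summable_geometric_of_lt_one (by norm_num) (by norm_num)).mul_left _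
  apply Summable.of_nonneg_of_le _ _ hs
  · intro n
    simp only [Function.comp, hf, hi]
    split <;> positivity
  · intro n
    simp only [Function.comp, hf, hi]
    have hle : (2:ℝ) ^ (k - 1 - (n:ℤ)) ≤ 2 ^ (k-1:ℤ) * (1/2)^n := by
      rw [zpow_sub₀ (by norm_num : (2:ℝ) ≠ 0), div_eq_mul_inv, one_div]
      gcongr
      rw [← zpow_natCast (2:ℝ)⁻¹, ← zpow_neg]
      simp
    split
    · exact hle
    · positivity

lemma shiftVec_sub {k k' : ℤ} (h : k ≤ k') (i : Fin d) :
    ∃ M : ℤ, shiftVec ω k' i = shiftVec ω k i + (M : ℝ) * 2 ^ k := by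
  classical
  set F : ℤ → ℝ := fun j => if ω j i then (2:ℝ) ^ (j : ℤ) else 0 with hF
  have hsum : ∀ t : ℤ, Summable ((Set.Iio t).indicator F) := by
    intro t
    rw [← summable_subtype_iff_indicator]
    exact summable_shift_piece t (fun j => ω j i)
  have hsplit : (Set.Iio k').indicator F =
      (Set.Iio k).indicator F + (Set.Ico k k').indicator F := by
    funext j
    simp only [Set.indicator, Set.mem_Iio, Set.mem_Ico, Pi.add_apply]
    split_ifs <;> first | (exfalso; omega) | ring
  have hIco : Summable ((Set.Ico k k').indicator F) := by
    apply summable_of_ne_finset_zero (s := (Set.finite_Ico k k').toFinset)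
    intro j hj
    simp only [Set.Finite.mem_toFinset, Set.mem_Ico] at hj
    simp [Set.indicator, hj]
  have hval : shiftVec ω k' i = shiftVec ω k i + ∑' j : ℤ, (Set.Ico k k').indicator F j := by
    rw [shiftVec, shiftVec]
    rw [show (fun j : {j : ℤ // j < k'} => if ω j.1 i then (2:ℝ) ^ (j.1:ℤ) else 0)
        = fun j : (Set.Iio k') => F j.1 from rfl]
    rw [show (fun j : {j : ℤ // j < k} => if ω j.1 i then (2:ℝ) ^ (j.1:ℤ) else 0)
        = fun j : (Set.Iio k) => F j.1 from rfl]
    change ∑' j : (Set.Iio k'), F j.1 = ∑' j : (Set.Iio k), F j.1 + _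
    rw [tsum_subtype, tsum_subtype, hsplit]
    simp only [Pi.add_apply]
    rw [Summable.tsum_add (hsum k) hIco]
  refine ⟨∑ j ∈ Finset.Ico k k', (if ω j i then (2:ℤ) ^ (j - k).toNat else 0), ?_⟩
  rw [hval]
  congr 1
  rw [tsum_eq_sum (s := Finset.Ico k k') (f := (Set.Ico k k').indicator F) (by
    intro j hj
    simp only [Finset.mem_Ico] at hj
    apply Set.indicator_of_notMem
    simp only [Set.mem_Ico]
    omega)]
  have hterm : ∀ j ∈ Finset.Ico k k', (Set.Ico k k').indicator F j
      = ((if ω j i then (2:ℤ) ^ (j - k).toNat else 0 : ℤ) : ℝ) * 2 ^ k := by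
    intro j hj
    simp only [Finset.mem_Ico] at hj
    rw [Set.indicator_of_mem (by simp only [Set.mem_Ico]; omega)]
    simp only [hF]
    split_ifs with hb
    · rw [show (((2:ℤ)^(j-k).toNat : ℤ):ℝ) = (2:ℝ)^((j-k).toNat) by push_cast; ring]
      rw [← zpow_natCast (2:ℝ) (j-k).toNat, Int.toNat_of_nonneg (by omega : (0:ℤ) ≤ j - k),
        ← zpow_add₀ (by norm_num : (2:ℝ) ≠ 0)]
      congr 1
      omega
    · simp
  rw [Finset.sum_congr rfl hterm, ← Finset.sum_mul]
  congr 1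
  push_cast
  rfl

end Statement2Aux
namespace Statement2Aux

open DyadicCube

variable {d : ℕ} {ω : TransParam d}

@[simp] lemma cubeAt_k (k : ℤ) (x : Fin d → ℝ) : (cubeAt ω k x).k = k := rfl

lemma mem_set_iff {Q : DyadicCube d} {x : Fin d → ℝ} :
    x ∈ Q.set ω ↔ ∀ i, (Q.m i : ℝ) * 2 ^ Q.k + shiftVec ω Q.k i ≤ x i ∧
      x i < ((Q.m i : ℝ) + 1) * 2 ^ Q.k + shiftVec ω Q.k i := Iff.rfl

lemma mem_cubeAt (k : ℤ) (x : Fin d → ℝ) : x ∈ (cubeAt ω k x).set ω := by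
  intro i
  have hp := two_zpow_pos k
  set u := (x i - shiftVec ω k i) / 2 ^ k with hu
  have h1 : (⌊u⌋ : ℝ) ≤ u := Int.floor_le u
  have h2 : u < ⌊u⌋ + 1 := Int.lt_floor_add_one u
  have hxu : x i = u * 2 ^ k + shiftVec ω k i := by
    rw [hu]; field_simp; ring
  constructor
  · show (⌊u⌋:ℝ) * 2 ^ k + shiftVec ω k i ≤ x i
    rw [hxu]; nlinarith
  · show x i < ((⌊u⌋:ℝ) + 1) * 2 ^ k + shiftVec ω k i
    rw [hxu]; nlinarith

lemma cubeAt_eq_of_mem {Q : DyadicCube d} {x : Fin d → ℝ} (hx : x ∈ Q.set ω) :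
    cubeAt ω Q.k x = Q := by
  rcases Q with ⟨k, m⟩
  simp only [cubeAt, DyadicCube.mk.injEq, true_and]
  funext i
  have hp := two_zpow_pos k
  rcases hx i with ⟨h1, h2⟩
  rw [Int.floor_eq_iff]
  constructor
  · rw [le_div_iff₀ hp]; simpa using by linarith
  · rw [div_lt_iff₀ hp]; push_cast; linarith

lemma cubeAt_congr {k k' : ℤ} (h : k ≤ k') {x y : Fin d → ℝ}
    (hxy : cubeAt ω k x = cubeAt ω k y) : cubeAt ω k' x = cubeAt ω k' y := by
  simp only [cubeAt, DyadicCube.mk.injEq, true_and] at hxy ⊢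
  funext i
  have hmi : ⌊(x i - shiftVec ω k i) / 2 ^ k⌋ = ⌊(y i - shiftVec ω k i) / 2 ^ k⌋ :=
    congrFun hxy i
  obtain ⟨M, hM⟩ := shiftVec_sub (ω := ω) h i
  have hp := two_zpow_pos k
  have key : ∀ z : Fin d → ℝ, ⌊(z i - shiftVec ω k' i) / 2 ^ k'⌋
      = (⌊(z i - shiftVec ω k i) / 2 ^ k⌋ - M) / 2 ^ (k' - k).toNat := by
    intro z
    have h2k' : (2:ℝ) ^ k' = 2 ^ k * ((2 ^ (k' - k).toNat : ℕ) : ℝ) := by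
      push_cast
      rw [← zpow_natCast (2:ℝ), Int.toNat_of_nonneg (by omega : (0:ℤ) ≤ k' - k),
        ← zpow_add₀ (by norm_num : (2:ℝ) ≠ 0)]
      congr 1
      omega
    have harg : (z i - shiftVec ω k' i) / 2 ^ k'
        = ((z i - shiftVec ω k i) / 2 ^ k - M) / ((2 ^ (k' - k).toNat : ℕ) : ℝ) := by
      rw [hM, h2k']
      have hq : ((2 ^ (k' - k).toNat : ℕ) : ℝ) ≠ 0 := by positivity
      field_simp
      ring
    rw [harg, floor_div_nat' _ _ (pow_pos (by norm_num : (0:ℕ) < 2) _), Int.floor_sub_intCast]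
    norm_cast
  rw [key x, key y, hmi]

lemma mem_cubeAt_iff {k : ℤ} {x y : Fin d → ℝ} :
    y ∈ (cubeAt ω k x).set ω ↔ cubeAt ω k y = cubeAt ω k x := by
  constructor
  · intro hy
    have := cubeAt_eq_of_mem (ω := ω) hy
    simpa using this
  · intro h
    rw [← h]
    exact mem_cubeAt k y

lemma cubeAt_set_subset {k k' : ℤ} (h : k ≤ k') (x : Fin d → ℝ) :
    (cubeAt ω k x).set ω ⊆ (cubeAt ω k' x).set ω := by
  intro y hy
  rw [mem_cubeAt_iff] at hy ⊢
  exact cubeAt_congr h hy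

lemma subset_or_disjoint {Q Q' : DyadicCube d} (h : Q.k ≤ Q'.k) :
    Q.set ω ⊆ Q'.set ω ∨ Q.set ω ∩ Q'.set ω = ∅ := by
  by_cases hne : (Q.set ω ∩ Q'.set ω).Nonempty
  · left
    obtain ⟨z, hz1, hz2⟩ := hne
    rw [← cubeAt_eq_of_mem (ω := ω) hz1, ← cubeAt_eq_of_mem (ω := ω) hz2]
    exact cubeAt_set_subset h z
  · right
    exact Set.not_nonempty_iff_eq_empty.mp hne

/-- canonical corner point of a cube -/
def corner (ω : TransParam d) (Q : DyadicCube d) : Fin d → ℝ :=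
  fun i => (Q.m i : ℝ) * 2 ^ Q.k + shiftVec ω Q.k i

lemma corner_mem (Q : DyadicCube d) : corner ω Q ∈ Q.set ω := by
  intro i
  have hp := two_zpow_pos Q.k
  exact ⟨le_refl _, by simp only [corner]; nlinarith⟩

lemma cubeAt_corner (Q : DyadicCube d) : cubeAt ω Q.k (corner ω Q) = Q :=
  cubeAt_eq_of_mem (corner_mem Q)

lemma cubeAt_corner_cubeAt (k : ℤ) (x : Fin d → ℝ) :
    cubeAt ω k (corner ω (cubeAt ω k x)) = cubeAt ω k x :=
  cubeAt_corner (cubeAt ω k x)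

/-- a function constant on generation-`s` cubes, transferred to any smaller scale cube -/
lemma constOnScale_eq {s : ℤ} {f : (Fin d → ℝ) → ℝ} (hf : ConstOnScale ω s f)
    {C : DyadicCube d} (hk : C.k ≤ s) {x y : Fin d → ℝ}
    (hx : x ∈ C.set ω) (hy : y ∈ C.set ω) : f x = f y := by
  apply hf
  apply cubeAt_congr hk
  rw [cubeAt_eq_of_mem hx, cubeAt_eq_of_mem hy]

lemma set_eq_pi (Q : DyadicCube d) : Q.set ω = Set.pi Set.univ
    (fun i => Set.Ico ((Q.m i : ℝ) * 2 ^ Q.k + shiftVec ω Q.k i)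
      (((Q.m i : ℝ) + 1) * 2 ^ Q.k + shiftVec ω Q.k i)) := by
  ext x
  simp [DyadicCube.set, Set.mem_pi, Set.mem_Ico]

lemma measurableSet_set (Q : DyadicCube d) : MeasurableSet (Q.set ω) := by
  rw [set_eq_pi]
  exact MeasurableSet.univ_pi (fun i => measurableSet_Ico)

lemma isBounded_set (Q : DyadicCube d) : Bornology.IsBounded (Q.set ω) := by
  rw [set_eq_pi]
  apply Bornology.IsBounded.pi
  intro i
  exact Metric.isBounded_Ico _ _

lemma measure_set_lt_top (ν : Measure (Fin d → ℝ)) [IsLocallyFiniteMeasure ν]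
    (Q : DyadicCube d) : ν (Q.set ω) < ∞ := by
  have hc : IsCompact (closure (Q.set ω)) := (isBounded_set Q).isCompact_closure
  exact lt_of_le_of_lt (measure_mono subset_closure) hc.measure_lt_top

lemma pairwise_disjoint_scale (k : ℤ) :
    Pairwise (Function.onFun Disjoint
      (fun m : Fin d → ℤ => (DyadicCube.mk k m).set ω)) := by
  intro m m' hmm
  simp only [Function.onFun]
  rw [Set.disjoint_left]
  intro z hz hz'
  have h1 := cubeAt_eq_of_mem (ω := ω) hz
  have h2 := cubeAt_eq_of_mem (ω := ω) hz'
  apply hmm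
  have := h1.symm.trans h2
  simpa using this

lemma iUnion_scale_eq_univ (k : ℤ) :
    (⋃ m : Fin d → ℤ, (DyadicCube.mk k m).set ω) = Set.univ := by
  ext x
  simp only [Set.mem_iUnion, Set.mem_univ, iff_true]
  exact ⟨(cubeAt ω k x).m, mem_cubeAt k x⟩

lemma measurable_comp_cubeAt {s : ℤ} (φ : DyadicCube d → ℝ) :
    Measurable (fun x : Fin d → ℝ => φ (cubeAt ω s x)) := by
  have : (fun x : Fin d → ℝ => φ (cubeAt ω s x))
      = (fun md : Fin d → ℤ => φ ⟨s, md⟩) ∘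
        (fun x : Fin d → ℝ => fun i => ⌊(x i - shiftVec ω s i) / 2 ^ s⌋) := rfl
  rw [this]
  apply Measurable.comp
  · exact measurable_of_countable _
  · apply measurable_pi_lambda
    intro i
    apply Measurable.floor
    exact ((measurable_pi_apply i).sub measurable_const).div measurable_const

/-- any function constant on generation-`s` cubes is measurable -/
lemma constOnScale_measurable {s : ℤ} {f : (Fin d → ℝ) → ℝ}
    (hf : ConstOnScale ω s f) : Measurable f := by
  have : f = fun x => f (corner ω (cubeAt ω s x)) := by
    funext x
    exact hf x _ (cubeAt_corner_cubeAt s x).symm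
  rw [this]
  exact measurable_comp_cubeAt (ω := ω) (fun E => f (corner ω E))

end Statement2Aux
namespace Statement2Aux

open DyadicCube

variable {d : ℕ} {ω : TransParam d} {ν : Measure (Fin d → ℝ)} [IsLocallyFiniteMeasure ν]

lemma setIntegral_eq_integral_of_zero_off {s : Set (Fin d → ℝ)} (hs : MeasurableSet s)
    {f : (Fin d → ℝ) → ℝ} (h0 : ∀ x ∉ s, f x = 0) :
    ∫ x in s, f x ∂ν = ∫ x, f x ∂ν := by
  rw [← integral_indicator hs]
  congr 1
  funext x
  by_cases h : x ∈ s <;> simp [Set.indicator, h, h0 x]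

lemma integrable_of_bound_support {f : (Fin d → ℝ) → ℝ} (hm : Measurable f)
    (U : DyadicCube d) (h0 : ∀ x ∉ U.set ω, f x = 0) {B : ℝ} (hB : ∀ x, |f x| ≤ B) :
    Integrable f ν := by
  have hind : f = (U.set ω).indicator f := by
    funext x
    by_cases h : x ∈ U.set ω <;> simp [Set.indicator, h, h0 x]
  rw [hind, integrable_indicator_iff (measurableSet_set U)]
  apply Measure.integrableOn_of_bounded (measure_set_lt_top ν U).ne
    hm.aestronglyMeasurable
  exact Filter.Eventually.of_forall (fun x => by simpa using hB x)

lemma avg_mul_measure (C : DyadicCube d) (g : (Fin d → ℝ) → ℝ) :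
    avg ω ν C g * (ν (C.set ω)).toReal = ∫ x in C.set ω, g x ∂ν := by
  by_cases h0 : ν (C.set ω) = 0
  · rw [Measure.restrict_eq_zero.mpr h0]
    simp [avg, h0, Measure.restrict_eq_zero.mpr h0]
  · have ht : (ν (C.set ω)).toReal ≠ 0 := by
      simp [ENNReal.toReal_ne_zero, h0, (measure_set_lt_top ν C).ne]
    rw [avg]
    field_simp

lemma avg_eq_of_const {C : DyadicCube d} {g : (Fin d → ℝ) → ℝ} {x : Fin d → ℝ}
    (hx : x ∈ C.set ω) (hconst : ∀ y ∈ C.set ω, g y = g x)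
    (h0 : ν (C.set ω) ≠ 0) : avg ω ν C g = g x := by
  have ht : (ν (C.set ω)).toReal ≠ 0 := by
    simp [ENNReal.toReal_ne_zero, h0, (measure_set_lt_top ν C).ne]
  rw [avg, setIntegral_congr_fun (measurableSet_set C)
    (fun y hy => hconst y hy : Set.EqOn g (fun _ => g x) (C.set ω)), setIntegral_const,
    smul_eq_mul, measureReal_def, ← mul_assoc, inv_mul_cancel₀ ht, one_mul]

lemma abs_avg_le {C : DyadicCube d} {g : (Fin d → ℝ) → ℝ} {B : ℝ}
    (hB : 0 ≤ B) (hb : ∀ y, |g y| ≤ B) : |avg ω ν C g| ≤ B := by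
  rw [avg, abs_mul, abs_inv, abs_of_nonneg ENNReal.toReal_nonneg]
  by_cases h0 : (ν (C.set ω)).toReal = 0
  · simpa [h0] using hB
  · have habs : |∫ x in C.set ω, g x ∂ν| ≤ B * (ν (C.set ω)).toReal := by
      have := norm_setIntegral_le_of_norm_le_const (μ := ν) (s := C.set ω) (f := g)
        (C := B) (measure_set_lt_top ν C)
        (fun x _ => by rw [Real.norm_eq_abs]; exact hb x)
      rwa [Real.norm_eq_abs] at this
    calc ((ν (C.set ω)).toReal)⁻¹ * |∫ x in C.set ω, g x ∂ν|
        ≤ ((ν (C.set ω)).toReal)⁻¹ * (B * (ν (C.set ω)).toReal) := by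
          apply mul_le_mul_of_nonneg_left habs
          positivity
      _ = B := by field_simp

lemma genHaar_measurable {Q : DyadicCube d} {h : (Fin d → ℝ) → ℝ}
    (hh : IsGenHaar ω Q h) : Measurable h := constOnScale_measurable hh.2

lemma genHaar_bounded {Q : DyadicCube d} {h : (Fin d → ℝ) → ℝ}
    (hh : IsGenHaar ω Q h) : ∃ B, 0 ≤ B ∧ ∀ x, |h x| ≤ B := by
  classical
  set s' : Fin d → ℝ := fun i => shiftVec ω (Q.k - 1) i with hs'
  set lo : Fin d → ℤ := fun i =>
    ⌊((Q.m i : ℝ) * 2 ^ Q.k + shiftVec ω Q.k i - s' i) / 2 ^ (Q.k - 1)⌋ with hlo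
  set hi : Fin d → ℤ := fun i =>
    ⌊(((Q.m i : ℝ) + 1) * 2 ^ Q.k + shiftVec ω Q.k i - s' i) / 2 ^ (Q.k - 1)⌋ with hhi
  set M : Finset (Fin d → ℤ) := Fintype.piFinset (fun i => Finset.Icc (lo i) (hi i)) with hM
  set B : ℝ := ∑ m ∈ M, |h (corner ω ⟨Q.k - 1, m⟩)| with hB
  have hB0 : 0 ≤ B := Finset.sum_nonneg (fun _ _ => abs_nonneg _)
  refine ⟨B, hB0, ?_⟩
  intro x
  by_cases hx : x ∈ Q.set ω
  · have hx' : h x = h (corner ω (cubeAt ω (Q.k - 1) x)) :=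
      hh.2 x _ (cubeAt_corner_cubeAt _ x).symm
    have hmem : (cubeAt ω (Q.k - 1) x).m ∈ M := by
      rw [hM, Fintype.mem_piFinset]
      intro i
      rw [Finset.mem_Icc]
      have hp : (0:ℝ) < 2 ^ (Q.k - 1) := two_zpow_pos _
      rcases hx i with ⟨h1, h2⟩
      constructor
      · apply Int.floor_le_floor
        gcongr
      · apply Int.floor_le_floor
        gcongr
    have hcc : cubeAt ω (Q.k - 1) x = ⟨Q.k - 1, (cubeAt ω (Q.k - 1) x).m⟩ := rfl
    rw [hx', hcc]
    exact Finset.single_le_sum (f := fun m => |h (corner ω ⟨Q.k - 1, m⟩)|)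
      (fun _ _ => abs_nonneg _) hmem
  · rw [hh.1 x hx]
    simpa using hB0

end Statement2Aux
namespace Statement2Aux

open DyadicCube

variable {d : ℕ} {ω : TransParam d} {mm nn : ℕ}
variable {μ : Measure (Fin d → ℝ)} [IsLocallyFiniteMeasure μ]

lemma vol_pos (P : DyadicCube d) : 0 < vol P := by
  rw [vol]; positivity

lemma kernelAt_zero (S : ElemShift d ω mm nn) {P : DyadicCube d} (hP : P ∉ S.cubes)
    (x y : Fin d → ℝ) : S.kernelAt P x y = 0 := by
  rw [ElemShift.kernelAt, if_neg (by tauto)]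

lemma abs_kernelAt_le_one (S : ElemShift d ω mm nn) (P : DyadicCube d)
    (x y : Fin d → ℝ) : |S.kernelAt P x y| ≤ 1 := by
  rw [ElemShift.kernelAt]
  split_ifs
  · rw [abs_mul]
    exact S.normBound _ _ _ x y
  · simp

lemma kernelAt_support_x (S : ElemShift d ω mm nn) {P : DyadicCube d} {x y : Fin d → ℝ}
    (h : S.kernelAt P x y ≠ 0) : x ∈ P.set ω := by
  rw [ElemShift.kernelAt] at h
  by_cases hc : P ∈ S.cubes ∧
      (DyadicCube.cubeAt ω (P.k - mm) y).set ω ⊆ P.set ω ∧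
      (DyadicCube.cubeAt ω (P.k - nn) x).set ω ⊆ P.set ω
  · exact hc.2.2 (mem_cubeAt _ x)
  · rw [if_neg hc] at h; exact absurd rfl h

lemma kernelAt_support_y (S : ElemShift d ω mm nn) {P : DyadicCube d} {x y : Fin d → ℝ}
    (h : S.kernelAt P x y ≠ 0) : y ∈ P.set ω := by
  rw [ElemShift.kernelAt] at h
  by_cases hc : P ∈ S.cubes ∧
      (DyadicCube.cubeAt ω (P.k - mm) y).set ω ⊆ P.set ω ∧
      (DyadicCube.cubeAt ω (P.k - nn) x).set ω ⊆ P.set ω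
  · exact hc.2.1 (mem_cubeAt _ y)
  · rw [if_neg hc] at h; exact absurd rfl h

lemma kernelAt_congr_y (S : ElemShift d ω mm nn) (P : DyadicCube d) (x : Fin d → ℝ)
    {y y' : Fin d → ℝ} (hy : cubeAt ω (P.k - mm - 1) y = cubeAt ω (P.k - mm - 1) y') :
    S.kernelAt P x y = S.kernelAt P x y' := by
  have hD : cubeAt ω (P.k - mm) y = cubeAt ω (P.k - mm) y' := cubeAt_congr (by omega) hy
  rw [ElemShift.kernelAt, ElemShift.kernelAt, hD]
  split_ifs with hc
  · congr 1
    exact (S.haar1 P (cubeAt ω (P.k - mm) y') (cubeAt ω (P.k - nn) x)).2 y y' hy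
  · rfl

lemma kernelAt_congr_x (S : ElemShift d ω mm nn) (P : DyadicCube d) (y : Fin d → ℝ)
    {x x' : Fin d → ℝ} (hx : cubeAt ω (P.k - nn - 1) x = cubeAt ω (P.k - nn - 1) x') :
    S.kernelAt P x y = S.kernelAt P x' y := by
  have hD : cubeAt ω (P.k - nn) x = cubeAt ω (P.k - nn) x' := cubeAt_congr (by omega) hx
  rw [ElemShift.kernelAt, ElemShift.kernelAt, hD]
  split_ifs with hc
  · congr 1
    exact (S.haar2 P (cubeAt ω (P.k - mm) y) (cubeAt ω (P.k - nn) x')).2 x x' hx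
  · rfl

lemma kernel_eq_sum (S : ElemShift d ω mm nn) (hfin : S.cubes.Finite) (x y : Fin d → ℝ) :
    S.kernel x y = ∑ P ∈ hfin.toFinset, (vol P)⁻¹ * S.kernelAt P x y := by
  rw [ElemShift.kernel]
  apply tsum_eq_sum
  intro P hP
  rw [kernelAt_zero S (by simpa using hP), mul_zero]

/-- the kernel size constant -/
def CK {S : ElemShift d ω mm nn} (hfin : S.cubes.Finite) : ℝ :=
  ∑ P ∈ hfin.toFinset, (vol P)⁻¹

lemma CK_nonneg {S : ElemShift d ω mm nn} (hfin : S.cubes.Finite) : 0 ≤ CK hfin :=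
  Finset.sum_nonneg (fun P _ => inv_nonneg.mpr (vol_pos P).le)

lemma abs_kernel_le (S : ElemShift d ω mm nn) (hfin : S.cubes.Finite) (x y : Fin d → ℝ) :
    |S.kernel x y| ≤ CK hfin := by
  rw [kernel_eq_sum S hfin, CK]
  refine (Finset.abs_sum_le_sum_abs _ _).trans ?_
  apply Finset.sum_le_sum
  intro P _
  rw [abs_mul, abs_inv, abs_of_pos (vol_pos P)]
  calc (vol P)⁻¹ * |S.kernelAt P x y| ≤ (vol P)⁻¹ * 1 := by
        apply mul_le_mul_of_nonneg_left (abs_kernelAt_le_one S P x y)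
        exact inv_nonneg.mpr (vol_pos P).le
    _ = (vol P)⁻¹ := mul_one _

lemma kernelAt_mul_integrable (S : ElemShift d ω mm nn) (P : DyadicCube d)
    (x : Fin d → ℝ) {f : (Fin d → ℝ) → ℝ} (hf : Measurable f) {B : ℝ}
    (hBf : ∀ y, |f y| ≤ B) : Integrable (fun y => S.kernelAt P x y * f y) μ := by
  have hBnn : 0 ≤ B := le_trans (abs_nonneg _) (hBf (corner ω P))
  apply integrable_of_bound_support (ν := μ) (f := fun y => S.kernelAt P x y * f y)
    ((constOnScale_measurable (fun y y' h => kernelAt_congr_y S P x h)).mul hf) P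
  · intro y hy
    by_cases h : S.kernelAt P x y = 0
    · rw [h, zero_mul]
    · exact absurd (kernelAt_support_y S h) hy
  · intro y
    rw [abs_mul]
    calc |S.kernelAt P x y| * |f y| ≤ 1 * B :=
        mul_le_mul (abs_kernelAt_le_one S P x y) (hBf y) (abs_nonneg _) zero_le_one
      _ = B := one_mul B

lemma op_eq_sum (S : ElemShift d ω mm nn) (hfin : S.cubes.Finite)
    {f : (Fin d → ℝ) → ℝ} (hf : Measurable f) {B : ℝ} (hBf : ∀ y, |f y| ≤ B)
    (x : Fin d → ℝ) : S.op μ f x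
      = ∑ P ∈ hfin.toFinset, (vol P)⁻¹ * ∫ y, S.kernelAt P x y * f y ∂μ := by
  rw [ElemShift.op]
  have h1 : ∀ y, S.kernel x y * f y
      = ∑ P ∈ hfin.toFinset, (vol P)⁻¹ * (S.kernelAt P x y * f y) := by
    intro y
    rw [kernel_eq_sum S hfin, Finset.sum_mul]
    apply Finset.sum_congr rfl
    intro P _
    ring
  rw [show (fun y => S.kernel x y * f y)
      = fun y => ∑ P ∈ hfin.toFinset, (vol P)⁻¹ * (S.kernelAt P x y * f y) from funext h1]
  rw [integral_finset_sum _ (fun P _ => (kernelAt_mul_integrable S P x hf hBf).const_mul _)]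
  apply Finset.sum_congr rfl
  intro P _
  rw [integral_const_mul]

lemma op_constOnScale (S : ElemShift d ω mm nn) {s : ℤ}
    (hs : ∀ P ∈ S.cubes, s ≤ P.k - nn - 1) (f : (Fin d → ℝ) → ℝ) :
    ConstOnScale ω s (S.op μ f) := by
  intro x x' h
  rw [ElemShift.op, ElemShift.op]
  congr 1
  funext y
  congr 1
  rw [ElemShift.kernel, ElemShift.kernel]
  apply tsum_congr
  intro P
  by_cases hP : P ∈ S.cubes
  · rw [kernelAt_congr_x S P y (cubeAt_congr (hs P hP) h)]
  · rw [kernelAt_zero S hP, kernelAt_zero S hP]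

lemma op_measurable (S : ElemShift d ω mm nn) (hfin : S.cubes.Finite)
    (f : (Fin d → ℝ) → ℝ) : Measurable (S.op μ f) := by
  classical
  obtain ⟨s, hs⟩ : ∃ s : ℤ, ∀ P ∈ S.cubes, s ≤ P.k - nn - 1 := by
    set T : Finset ℤ := insert (0:ℤ) (hfin.toFinset.image (fun P => P.k - (nn:ℤ) - 1))
      with hT
    refine ⟨T.min' ⟨0, by simp [hT]⟩, fun P hP => Finset.min'_le _ _ ?_⟩
    rw [hT]
    exact Finset.mem_insert_of_mem (Finset.mem_image_of_mem _ (by simpa using hP))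
  exact constOnScale_measurable (op_constOnScale S hs f)

lemma abs_op_le (S : ElemShift d ω mm nn) (hfin : S.cubes.Finite)
    {f : (Fin d → ℝ) → ℝ} {B : ℝ} (hB : 0 ≤ B) (hBf : ∀ y, |f y| ≤ B)
    (U : DyadicCube d) (hsupp : ∀ y ∉ U.set ω, f y = 0) (x : Fin d → ℝ) :
    |S.op μ f x| ≤ CK hfin * B * (μ (U.set ω)).toReal := by
  rw [ElemShift.op]
  have hmaj : ∀ y, ‖S.kernel x y * f y‖
      ≤ (U.set ω).indicator (fun _ => CK hfin * B) y := by
    intro y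
    rw [Real.norm_eq_abs, abs_mul]
    by_cases hy : y ∈ U.set ω
    · rw [Set.indicator_of_mem hy]
      exact mul_le_mul (abs_kernel_le S hfin x y) (hBf y) (abs_nonneg _) (CK_nonneg hfin)
    · rw [Set.indicator_of_notMem hy, hsupp y hy]
      simp
  calc |∫ y, S.kernel x y * f y ∂μ|
      = ‖∫ y, S.kernel x y * f y ∂μ‖ := (Real.norm_eq_abs _).symm
    _ ≤ ∫ y, ‖S.kernel x y * f y‖ ∂μ :=
      norm_integral_le_integral_norm _
    _ ≤ ∫ y, (U.set ω).indicator (fun _ => CK hfin * B) y ∂μ := by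
      apply integral_mono_of_nonneg (Filter.Eventually.of_forall (fun y => norm_nonneg _))
      · rw [integrable_indicator_iff (measurableSet_set U)]
        exact integrableOn_const (measure_set_lt_top μ U).ne
      · exact Filter.Eventually.of_forall hmaj
    _ = CK hfin * B * (μ (U.set ω)).toReal := by
      rw [integral_indicator_const _ (measurableSet_set U), smul_eq_mul, mul_comm, measureReal_def]

end Statement2Aux
namespace Statement2Aux

open DyadicCube

variable {d : ℕ} {ω : TransParam d} {ν : Measure (Fin d → ℝ)} [IsLocallyFiniteMeasure ν]

lemma setIntegral_scale_partition (k : ℤ) {s : Set (Fin d → ℝ)} (hs : MeasurableSet s)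
    {f : (Fin d → ℝ) → ℝ} (hf : IntegrableOn f s ν) :
    ∫ x in s, f x ∂ν = ∑' m : Fin d → ℤ, ∫ x in (DyadicCube.mk k m).set ω ∩ s, f x ∂ν := by
  have hcov : (⋃ m : Fin d → ℤ, (DyadicCube.mk k m).set ω ∩ s) = s := by
    rw [← Set.iUnion_inter, iUnion_scale_eq_univ, Set.univ_inter]
  have key := integral_iUnion (μ := ν)
    (s := fun m : Fin d → ℤ => (DyadicCube.mk k m).set ω ∩ s)
    (fun m => (measurableSet_set _).inter hs)
    (fun m m' hmm => Disjoint.mono Set.inter_subset_left Set.inter_subset_left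
      (pairwise_disjoint_scale (ω := ω) k hmm))
    (by rw [hcov]; exact hf)
  rw [hcov] at key
  exact key

lemma integral_scale_partition (k : ℤ) {f : (Fin d → ℝ) → ℝ} (hf : Integrable f ν) :
    ∫ x, f x ∂ν = ∑' m : Fin d → ℤ, ∫ x in (DyadicCube.mk k m).set ω, f x ∂ν := by
  calc ∫ x, f x ∂ν = ∫ x in Set.univ, f x ∂ν := by rw [setIntegral_univ]
    _ = ∑' m : Fin d → ℤ, ∫ x in (DyadicCube.mk k m).set ω ∩ Set.univ, f x ∂ν :=
      setIntegral_scale_partition (ω := ω) k MeasurableSet.univ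
        (by rwa [IntegrableOn, Measure.restrict_univ])
    _ = ∑' m : Fin d → ℤ, ∫ x in (DyadicCube.mk k m).set ω, f x ∂ν := by
      simp [Set.inter_univ]

/-- averaging over the children reproduces the integral -/
lemma integral_avg_children (C : DyadicCube d) {g : (Fin d → ℝ) → ℝ}
    (hg : Measurable g) {B : ℝ} (hB : 0 ≤ B) (hBg : ∀ y, |g y| ≤ B) :
    ∫ x in C.set ω, avg ω ν (cubeAt ω (C.k - 1) x) g ∂ν = ∫ x in C.set ω, g x ∂ν := by
  set φ : (Fin d → ℝ) → ℝ := fun x => avg ω ν (cubeAt ω (C.k - 1) x) g with hφ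
  have hφm : Measurable φ := measurable_comp_cubeAt (fun E => avg ω ν E g)
  have hφb : ∀ x, |φ x| ≤ B := fun x => abs_avg_le hB hBg
  have hφi : IntegrableOn φ (C.set ω) ν :=
    Measure.integrableOn_of_bounded (measure_set_lt_top ν C).ne hφm.aestronglyMeasurable
      (Filter.Eventually.of_forall (fun x => by simpa using hφb x))
  have hgi : IntegrableOn g (C.set ω) ν :=
    Measure.integrableOn_of_bounded (measure_set_lt_top ν C).ne hg.aestronglyMeasurable
      (Filter.Eventually.of_forall (fun x => by simpa using hBg x))
  rw [setIntegral_scale_partition (C.k - 1) (measurableSet_set C) hφi,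
    setIntegral_scale_partition (C.k - 1) (measurableSet_set C) hgi]
  apply tsum_congr
  intro m
  rcases subset_or_disjoint (ω := ω) (Q := (⟨C.k - 1, m⟩ : DyadicCube d)) (Q' := C)
    (show C.k - 1 ≤ C.k by omega) with hsub | hdis
  · rw [Set.inter_eq_left.mpr hsub]
    have hcong : ∀ x ∈ (⟨C.k - 1, m⟩ : DyadicCube d).set ω,
        φ x = avg ω ν (⟨C.k - 1, m⟩ : DyadicCube d) g := by
      intro x hx
      have h1 : cubeAt ω (C.k - 1) x = (⟨C.k - 1, m⟩ : DyadicCube d) := cubeAt_eq_of_mem hx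
      simp only [hφ, h1]
    rw [setIntegral_congr_fun (measurableSet_set _) hcong, setIntegral_const, smul_eq_mul,
      mul_comm, measureReal_def, avg_mul_measure]
  · rw [hdis]
    simp

/-- key vanishing lemma: martingale differences at scales finer than `R` pair to zero
against a function constant at scale `R.k - 1`. -/
lemma small_scale_zero {R : DyadicCube d} {h : (Fin d → ℝ) → ℝ}
    (hhR : ConstOnScale ω (R.k - 1) h) {BR : ℝ} (hBR : ∀ x, |h x| ≤ BR)
    {g : (Fin d → ℝ) → ℝ} (hg : Measurable g) {B : ℝ} (hB : 0 ≤ B)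
    (hBg : ∀ y, |g y| ≤ B) {Q' : DyadicCube d} {j : ℤ} (hj1 : j ≤ R.k - 1)
    (hj2 : j ≤ Q'.k) :
    ∫ x in Q'.set ω,
      (avg ω ν (cubeAt ω (j - 1) x) g - avg ω ν (cubeAt ω j x) g) * h x ∂ν = 0 := by
  have hBR0 : 0 ≤ BR := le_trans (abs_nonneg _) (hBR 0)
  set ψ : (Fin d → ℝ) → ℝ := fun x =>
    (avg ω ν (cubeAt ω (j - 1) x) g - avg ω ν (cubeAt ω j x) g) * h x with hψ
  have hψm : Measurable ψ := by
    apply Measurable.mul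
    · exact (measurable_comp_cubeAt (fun E => avg ω ν E g)).sub
        (measurable_comp_cubeAt (fun E => avg ω ν E g))
    · exact constOnScale_measurable hhR
  have hψb : ∀ x, |ψ x| ≤ (B + B) * BR := by
    intro x
    rw [hψ, abs_mul]
    apply mul_le_mul _ (hBR x) (abs_nonneg _) (by linarith)
    exact (abs_sub _ _).trans (add_le_add (abs_avg_le hB hBg) (abs_avg_le hB hBg))
  have hψi : IntegrableOn ψ (Q'.set ω) ν :=
    Measure.integrableOn_of_bounded (measure_set_lt_top ν Q').ne hψm.aestronglyMeasurable
      (Filter.Eventually.of_forall (fun x => by simpa using hψb x))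
  rw [setIntegral_scale_partition j (measurableSet_set Q') hψi]
  have hzero : ∀ m : Fin d → ℤ,
      ∫ x in (DyadicCube.mk j m).set ω ∩ Q'.set ω, ψ x ∂ν = 0 := by
    intro m
    rcases subset_or_disjoint (ω := ω) (Q := (⟨j, m⟩ : DyadicCube d)) (Q' := Q')
      (show j ≤ Q'.k from hj2) with hsub | hdis
    · rw [Set.inter_eq_left.mpr hsub]
      have hcong : ∀ x ∈ (⟨j, m⟩ : DyadicCube d).set ω,
          ψ x = h (corner ω (⟨j, m⟩ : DyadicCube d)) *
            (avg ω ν (cubeAt ω (j - 1) x) g - avg ω ν (⟨j, m⟩ : DyadicCube d) g) := by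
        intro x hx
        have h1 : cubeAt ω j x = (⟨j, m⟩ : DyadicCube d) := cubeAt_eq_of_mem hx
        have h2 : h x = h (corner ω (⟨j, m⟩ : DyadicCube d)) :=
          constOnScale_eq hhR (show j ≤ R.k - 1 from hj1) hx (corner_mem _)
        simp only [hψ, h1, h2]
        ring
      rw [setIntegral_congr_fun (measurableSet_set _) hcong, integral_const_mul]
      have hsplit : ∫ x in (⟨j, m⟩ : DyadicCube d).set ω,
          (avg ω ν (cubeAt ω (j - 1) x) g - avg ω ν (⟨j, m⟩ : DyadicCube d) g) ∂ν = 0 := by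
        have hφi : IntegrableOn (fun x => avg ω ν (cubeAt ω (j - 1) x) g)
            ((⟨j, m⟩ : DyadicCube d).set ω) ν :=
          Measure.integrableOn_of_bounded (measure_set_lt_top ν _).ne
            (measurable_comp_cubeAt (fun E => avg ω ν E g)).aestronglyMeasurable
            (Filter.Eventually.of_forall (fun x => by simpa using abs_avg_le hB hBg))
        rw [integral_sub hφi (integrableOn_const (measure_set_lt_top ν _).ne)]
        have hE3 := integral_avg_children (ω := ω) (ν := ν) (⟨j, m⟩ : DyadicCube d) hg hB hBg
        rw [show (⟨j, m⟩ : DyadicCube d).k - 1 = j - 1 from rfl] at hE3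
        rw [hE3, setIntegral_const, smul_eq_mul, mul_comm, measureReal_def, avg_mul_measure, sub_self]
      rw [hsplit, mul_zero]
    · rw [hdis]
      simp
  rw [tsum_congr hzero]
  exact tsum_zero

/-- pairing with a function constant on scale `R.k - 1` cubes and supported on `R`:
replacing `g` by its scale-`(R.k-1)` averages does not change the pairing. -/
lemma pairing_avg {R : DyadicCube d} {h : (Fin d → ℝ) → ℝ}
    (hhR : ConstOnScale ω (R.k - 1) h) (hsupp : ∀ x ∉ R.set ω, h x = 0)
    {BR : ℝ} (hBR : ∀ x, |h x| ≤ BR)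
    {g : (Fin d → ℝ) → ℝ} (hg : Measurable g) {B : ℝ} (hB : 0 ≤ B)
    (hBg : ∀ y, |g y| ≤ B) :
    ∫ x, avg ω ν (cubeAt ω (R.k - 1) x) g * h x ∂ν = ∫ x, g x * h x ∂ν := by
  have hBR0 : 0 ≤ BR := le_trans (abs_nonneg _) (hBR 0)
  have hhm : Measurable h := constOnScale_measurable hhR
  have hint1 : Integrable (fun x => avg ω ν (cubeAt ω (R.k - 1) x) g * h x) ν := by
    apply integrable_of_bound_support (B := B * BR)
      (f := fun x => avg ω ν (cubeAt ω (R.k - 1) x) g * h x)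
      ((measurable_comp_cubeAt (fun E => avg ω ν E g)).mul hhm) R
    · intro x hx; rw [hsupp x hx, mul_zero]
    · intro x
      rw [abs_mul]
      exact mul_le_mul (abs_avg_le hB hBg) (hBR x) (abs_nonneg _) hB
  have hint2 : Integrable (fun x => g x * h x) ν := by
    apply integrable_of_bound_support (B := B * BR) (f := fun x => g x * h x) (hg.mul hhm) R
    · intro x hx; rw [hsupp x hx, mul_zero]
    · intro x
      rw [abs_mul]
      exact mul_le_mul (hBg x) (hBR x) (abs_nonneg _) hB
  rw [integral_scale_partition (R.k - 1) hint1, integral_scale_partition (R.k - 1) hint2]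
  apply tsum_congr
  intro m
  have hρ : ∀ x ∈ (⟨R.k - 1, m⟩ : DyadicCube d).set ω,
      h x = h (corner ω (⟨R.k - 1, m⟩ : DyadicCube d)) :=
    fun x hx => constOnScale_eq hhR (show R.k - 1 ≤ R.k - 1 from le_refl _) hx (corner_mem _)
  have hlhs : ∫ x in (⟨R.k - 1, m⟩ : DyadicCube d).set ω,
      avg ω ν (cubeAt ω (R.k - 1) x) g * h x ∂ν
      = h (corner ω (⟨R.k - 1, m⟩ : DyadicCube d)) *
        (avg ω ν (⟨R.k - 1, m⟩ : DyadicCube d) g *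
          (ν ((⟨R.k - 1, m⟩ : DyadicCube d).set ω)).toReal) := by
    have hcong : ∀ x ∈ (⟨R.k - 1, m⟩ : DyadicCube d).set ω,
        avg ω ν (cubeAt ω (R.k - 1) x) g * h x
        = h (corner ω (⟨R.k - 1, m⟩ : DyadicCube d)) *
          avg ω ν (⟨R.k - 1, m⟩ : DyadicCube d) g := by
      intro x hx
      have h1 : cubeAt ω (R.k - 1) x = (⟨R.k - 1, m⟩ : DyadicCube d) := cubeAt_eq_of_mem hx
      rw [h1, hρ x hx, mul_comm]
    rw [setIntegral_congr_fun (measurableSet_set _) hcong, setIntegral_const, smul_eq_mul,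
      measureReal_def]
    ring
  have hrhs : ∫ x in (⟨R.k - 1, m⟩ : DyadicCube d).set ω, g x * h x ∂ν
      = h (corner ω (⟨R.k - 1, m⟩ : DyadicCube d)) *
        ∫ x in (⟨R.k - 1, m⟩ : DyadicCube d).set ω, g x ∂ν := by
    have hcong : ∀ x ∈ (⟨R.k - 1, m⟩ : DyadicCube d).set ω,
        g x * h x = h (corner ω (⟨R.k - 1, m⟩ : DyadicCube d)) * g x := by
      intro x hx
      rw [hρ x hx, mul_comm]
    rw [setIntegral_congr_fun (measurableSet_set _) hcong, integral_const_mul]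
  rw [hlhs, hrhs, avg_mul_measure]

end Statement2Aux
namespace Statement2Aux

open DyadicCube

variable {d : ℕ} {ω : TransParam d} {mm nn : ℕ}
variable {μ ν : Measure (Fin d → ℝ)} [IsLocallyFiniteMeasure μ] [IsLocallyFiniteMeasure ν]

/-- `𝕊_μ 1_{Q'}` -/
def gfun (S : ElemShift d ω mm nn) (μ : Measure (Fin d → ℝ)) (Q' : DyadicCube d) :
    (Fin d → ℝ) → ℝ :=
  S.op μ (Set.indicator (Q'.set ω) fun _ => (1:ℝ))

/-- single summand of the paraproduct -/
def SUM (S : ElemShift d ω mm nn) (μ ν : Measure (Fin d → ℝ)) (r : ℕ)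
    (f : (Fin d → ℝ) → ℝ) (Q' : DyadicCube d) : (Fin d → ℝ) → ℝ :=
  fun x => DyadicCube.eproj ω μ Q' f x *
    DyadicCube.mdiff ω ν (DyadicCube.cubeAt ω (Q'.k - r) x) (gfun S μ Q') x

lemma shiftPara_eq (S : ElemShift d ω mm nn) (r : ℕ) (f : (Fin d → ℝ) → ℝ)
    (x : Fin d → ℝ) : shiftPara S μ ν r f x = ∑' Q' : DyadicCube d, SUM S μ ν r f Q' x := rfl

lemma indicator_one_meas (Q' : DyadicCube d) :
    Measurable (Set.indicator (Q'.set ω) fun _ => (1:ℝ)) :=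
  measurable_const.indicator (measurableSet_set Q')

lemma indicator_one_abs (Q' : DyadicCube d) (y : Fin d → ℝ) :
    |Set.indicator (Q'.set ω) (fun _ => (1:ℝ)) y| ≤ 1 := by
  by_cases h : y ∈ Q'.set ω <;> simp [Set.indicator, h]

lemma gfun_meas (S : ElemShift d ω mm nn) (hfin : S.cubes.Finite) (Q' : DyadicCube d) :
    Measurable (gfun S μ Q') := op_measurable S hfin _

lemma gfun_bound (S : ElemShift d ω mm nn) (hfin : S.cubes.Finite) (Q' : DyadicCube d)
    (x : Fin d → ℝ) : |gfun S μ Q' x| ≤ CK hfin * (μ (Q'.set ω)).toReal := by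
  have := abs_op_le (μ := μ) S hfin (f := Set.indicator (Q'.set ω) fun _ => (1:ℝ))
    zero_le_one (indicator_one_abs Q') Q'
    (fun y hy => Set.indicator_of_notMem hy _) x
  simpa [gfun, mul_one] using this

lemma gfun_const (S : ElemShift d ω mm nn) {s₀ : ℤ}
    (hs₀ : ∀ P ∈ S.cubes, s₀ ≤ P.k - nn - 1) (Q' : DyadicCube d) :
    ConstOnScale ω s₀ (gfun S μ Q') := op_constOnScale S hs₀ _

/-- unfolded form of the summand at a point of `Q'` -/
lemma SUM_eq_of_mem (S : ElemShift d ω mm nn) (r : ℕ) (f : (Fin d → ℝ) → ℝ)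
    {Q' : DyadicCube d} {x : Fin d → ℝ} (hx : x ∈ Q'.set ω) :
    SUM S μ ν r f Q' x = avg ω μ Q' f *
      (avg ω ν (cubeAt ω (Q'.k - r - 1) x) (gfun S μ Q')
        - avg ω ν (cubeAt ω (Q'.k - r) x) (gfun S μ Q')) := by
  rw [SUM, DyadicCube.eproj, if_pos hx, DyadicCube.mdiff,
    if_pos (mem_cubeAt (Q'.k - r) x)]
  simp only [cubeAt_k]

lemma SUM_eq_zero_of_not_mem (S : ElemShift d ω mm nn) (r : ℕ) (f : (Fin d → ℝ) → ℝ)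
    {Q' : DyadicCube d} {x : Fin d → ℝ} (hx : x ∉ Q'.set ω) :
    SUM S μ ν r f Q' x = 0 := by
  rw [SUM, DyadicCube.eproj, if_neg hx, zero_mul]

lemma SUM_eq_zero_of_avg_zero (S : ElemShift d ω mm nn) (r : ℕ) (f : (Fin d → ℝ) → ℝ)
    {Q' : DyadicCube d} (havg : avg ω μ Q' f = 0) (x : Fin d → ℝ) :
    SUM S μ ν r f Q' x = 0 := by
  rw [SUM, DyadicCube.eproj]
  split_ifs
  · rw [havg, zero_mul]
  · rw [zero_mul]

/-- the average of a weighted Haar function for `Q` over a cube at least as large as `Q`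
vanishes -/
lemma avg_haar_zero_large {Q C : DyadicCube d} {f : (Fin d → ℝ) → ℝ}
    (hf : IsWeightedHaar ω μ Q f) (hk : Q.k ≤ C.k) : avg ω μ C f = 0 := by
  rw [avg]
  rcases subset_or_disjoint (ω := ω) (Q := Q) (Q' := C) hk with hsub | hdis
  · rw [setIntegral_eq_integral_of_zero_off (measurableSet_set C)
      (fun x hx => hf.1.1 x (fun hxQ => hx (hsub hxQ))), hf.2.1, mul_zero]
  · rw [setIntegral_congr_fun (measurableSet_set C)
      (fun x hx => hf.1.1 x (fun hxQ => (Set.eq_empty_iff_forall_notMem.mp hdis x)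
        ⟨hxQ, hx⟩) : Set.EqOn f (fun _ => (0:ℝ)) (C.set ω))]
    simp

lemma avg_haar_zero_disjoint {Q C : DyadicCube d} {f : (Fin d → ℝ) → ℝ}
    (hf : IsWeightedHaar ω μ Q f) (hdis : ∀ x ∈ C.set ω, x ∉ Q.set ω) :
    avg ω μ C f = 0 := by
  rw [avg, setIntegral_congr_fun (measurableSet_set C)
    (fun x hx => hf.1.1 x (hdis x hx) : Set.EqOn f (fun _ => (0:ℝ)) (C.set ω))]
  simp

/-- the `ν`-null set of points lying in some `ν`-null cube -/
def NullSet (ω : TransParam d) (ν : Measure (Fin d → ℝ)) : Set (Fin d → ℝ) :=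
  ⋃ C : DyadicCube d, if ν (C.set ω) = 0 then C.set ω else ∅

lemma nullSet_null : ν (NullSet ω ν) = 0 := by
  apply measure_iUnion_null
  intro C
  split_ifs with h
  · exact h
  · simp

lemma measure_ne_zero_of_not_mem_nullSet {x : Fin d → ℝ} (hx : x ∉ NullSet ω ν)
    {C : DyadicCube d} (hxC : x ∈ C.set ω) : ν (C.set ω) ≠ 0 := by
  intro h0
  apply hx
  rw [NullSet, Set.mem_iUnion]
  exact ⟨C, by rw [if_pos h0]; exact hxC⟩

/-- Pointwise, the paraproduct applied to a weighted Haar function is a finite sum over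
the scales between `s₀ + r` (exclusive) and `Q.k` (exclusive). -/
lemma shiftPara_pointwise (S : ElemShift d ω mm nn) {s₀ : ℤ}
    (hs₀ : ∀ P ∈ S.cubes, s₀ ≤ P.k - nn - 1) (r : ℕ)
    {Q : DyadicCube d} {f : (Fin d → ℝ) → ℝ} (hf : IsWeightedHaar ω μ Q f)
    {x : Fin d → ℝ} (hx : x ∉ NullSet ω ν) :
    shiftPara S μ ν r f x
      = ∑ k ∈ Finset.Icc (s₀ + r + 1) (Q.k - 1), SUM S μ ν r f (cubeAt ω k x) x := by
  rw [shiftPara_eq]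
  rw [tsum_eq_sum (s := (Finset.Icc (s₀ + r + 1) (Q.k - 1)).image (fun k => cubeAt ω k x))]
  · rw [Finset.sum_image]
    intro k hk k' hk' hkk
    have := congrArg DyadicCube.k hkk
    simpa using this
  · intro Q' hQ'
    by_cases hxQ' : x ∈ Q'.set ω
    · have hQeq : cubeAt ω Q'.k x = Q' := cubeAt_eq_of_mem hxQ'
      have hknot : Q'.k ∉ Finset.Icc (s₀ + r + 1) (Q.k - 1) := by
        intro hc
        exact hQ' (Finset.mem_image.mpr ⟨Q'.k, hc, hQeq⟩)
      rw [Finset.mem_Icc, not_and_or, not_le, not_le] at hknot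
      rcases hknot with hsmall | hbig
      · -- small scale : martingale difference of a locally constant function vanishes
        have hconst := gfun_const (μ := μ) S hs₀ Q'
        have hmd : DyadicCube.mdiff ω ν (cubeAt ω (Q'.k - r) x) (gfun S μ Q') x = 0 := by
          rw [DyadicCube.mdiff, if_pos (mem_cubeAt (Q'.k - r) x)]
          simp only [cubeAt_k]
          have hA : avg ω ν (cubeAt ω (Q'.k - r - 1) x) (gfun S μ Q') = gfun S μ Q' x :=
            avg_eq_of_const (mem_cubeAt _ x)
              (fun y hy => constOnScale_eq hconst (by simp only [cubeAt_k]; omega) hy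
                (mem_cubeAt _ x))
              (measure_ne_zero_of_not_mem_nullSet hx (mem_cubeAt _ x))
          have hB : avg ω ν (cubeAt ω (Q'.k - r) x) (gfun S μ Q') = gfun S μ Q' x :=
            avg_eq_of_const (mem_cubeAt _ x)
              (fun y hy => constOnScale_eq hconst (by simp only [cubeAt_k]; omega) hy
                (mem_cubeAt _ x))
              (measure_ne_zero_of_not_mem_nullSet hx (mem_cubeAt _ x))
          rw [hA, hB, sub_self]
        rw [SUM, hmd, mul_zero]
      · -- large scale : the average of the Haar function vanishes
        apply SUM_eq_zero_of_avg_zero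
        exact avg_haar_zero_large hf (by omega)
    · exact SUM_eq_zero_of_not_mem S r f hxQ'

end Statement2Aux
namespace Statement2Aux

open DyadicCube

variable {d : ℕ} {ω : TransParam d} {mm nn : ℕ}
variable {μ ν : Measure (Fin d → ℝ)} [IsLocallyFiniteMeasure μ] [IsLocallyFiniteMeasure ν]

@[simp] lemma mk_k (k : ℤ) (m : Fin d → ℤ) : (DyadicCube.mk k m).k = k := rfl

lemma Tk_constOnScale (S : ElemShift d ω mm nn) (r : ℕ) (f : (Fin d → ℝ) → ℝ) (k : ℤ) :
    ConstOnScale ω (k - r - 1) (fun x => SUM S μ ν r f (cubeAt ω k x) x) := by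
  intro x y hxy
  show SUM S μ ν r f (cubeAt ω k x) x = SUM S μ ν r f (cubeAt ω k y) y
  have h1 : cubeAt ω (k - r) x = cubeAt ω (k - r) y := cubeAt_congr (by omega) hxy
  have h2 : cubeAt ω k x = cubeAt ω k y := cubeAt_congr (by omega) hxy
  rw [SUM_eq_of_mem S r f (mem_cubeAt k x), SUM_eq_of_mem S r f (mem_cubeAt k y)]
  simp only [cubeAt_k]
  rw [h2, h1, hxy]

lemma Tk_meas (S : ElemShift d ω mm nn) (r : ℕ) (f : (Fin d → ℝ) → ℝ) (k : ℤ) :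
    Measurable (fun x => SUM S μ ν r f (cubeAt ω k x) x) :=
  constOnScale_measurable (Tk_constOnScale S r f k)

lemma Tk_bound (S : ElemShift d ω mm nn) (hfin : S.cubes.Finite) (r : ℕ)
    {f : (Fin d → ℝ) → ℝ} {Bf : ℝ} (hBf0 : 0 ≤ Bf) (hBf : ∀ y, |f y| ≤ Bf)
    {R : DyadicCube d} (k : ℤ) {x : Fin d → ℝ} (hxR : x ∈ R.set ω) :
    |SUM S μ ν r f (cubeAt ω k x) x| ≤ Bf * (2 * (CK hfin *
      (μ ((cubeAt ω (max k R.k) (corner ω R)).set ω)).toReal)) := by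
  have hW : (cubeAt ω k x).set ω ⊆ (cubeAt ω (max k R.k) (corner ω R)).set ω := by
    have hsub : (cubeAt ω k x).set ω ⊆ (cubeAt ω (max k R.k) x).set ω :=
      cubeAt_set_subset (le_max_left _ _) x
    have heq : cubeAt ω (max k R.k) x = cubeAt ω (max k R.k) (corner ω R) := by
      apply cubeAt_congr (le_max_right _ _)
      rw [cubeAt_eq_of_mem hxR, cubeAt_eq_of_mem (corner_mem R)]
    rwa [heq] at hsub
  set W := cubeAt ω (max k R.k) (corner ω R)
  have hμW : 0 ≤ CK hfin * (μ (W.set ω)).toReal :=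
    mul_nonneg (CK_nonneg hfin) ENNReal.toReal_nonneg
  have hg : ∀ z, |gfun S μ (cubeAt ω k x) z| ≤ CK hfin * (μ (W.set ω)).toReal := by
    intro z
    refine (gfun_bound S hfin _ z).trans ?_
    apply mul_le_mul_of_nonneg_left _ (CK_nonneg hfin)
    exact ENNReal.toReal_mono (measure_set_lt_top μ W).ne (measure_mono hW)
  rw [SUM_eq_of_mem S r f (mem_cubeAt k x), abs_mul]
  apply mul_le_mul (abs_avg_le hBf0 hBf) _ (abs_nonneg _) hBf0
  refine (abs_sub _ _).trans ?_
  have b1 := abs_avg_le (ω := ω) (ν := ν) (C := cubeAt ω ((cubeAt ω k x).k - r - 1) x) hμW hg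
  have b2 := abs_avg_le (ω := ω) (ν := ν) (C := cubeAt ω ((cubeAt ω k x).k - r) x) hμW hg
  linarith

lemma Tk_int (S : ElemShift d ω mm nn) (hfin : S.cubes.Finite) (r : ℕ)
    {f h : (Fin d → ℝ) → ℝ} {Bf Bh : ℝ} (hBf0 : 0 ≤ Bf) (hBf : ∀ y, |f y| ≤ Bf)
    (hBh0 : 0 ≤ Bh) (hBh : ∀ y, |h y| ≤ Bh) (hhm : Measurable h)
    {R : DyadicCube d} (hsupp : ∀ x ∉ R.set ω, h x = 0) (k : ℤ) :
    Integrable (fun x => SUM S μ ν r f (cubeAt ω k x) x * h x) ν := by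
  set BW := Bf * (2 * (CK hfin *
    (μ ((cubeAt ω (max k R.k) (corner ω R)).set ω)).toReal)) with hBW
  have hBW0 : 0 ≤ BW := mul_nonneg hBf0 (mul_nonneg (by norm_num)
    (mul_nonneg (CK_nonneg hfin) ENNReal.toReal_nonneg))
  apply integrable_of_bound_support (B := BW * Bh)
    (f := fun x => SUM S μ ν r f (cubeAt ω k x) x * h x) ((Tk_meas S r f k).mul hhm) R
  · intro x hx
    rw [hsupp x hx, mul_zero]
  · intro x
    by_cases hxR : x ∈ R.set ω
    · rw [abs_mul]
      exact mul_le_mul (Tk_bound S hfin r hBf0 hBf k hxR) (hBh x) (abs_nonneg _) hBW0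
    · rw [hsupp x hxR, mul_zero, abs_zero]
      positivity

lemma scale_split (S : ElemShift d ω mm nn) (r : ℕ) (f h : (Fin d → ℝ) → ℝ) (k : ℤ)
    (hint : Integrable (fun x => SUM S μ ν r f (cubeAt ω k x) x * h x) ν) :
    ∫ x, SUM S μ ν r f (cubeAt ω k x) x * h x ∂ν
      = ∑' m : Fin d → ℤ,
        ∫ x in (DyadicCube.mk k m).set ω, SUM S μ ν r f ⟨k, m⟩ x * h x ∂ν := by
  rw [integral_scale_partition k hint]
  apply tsum_congr
  intro m
  apply setIntegral_congr_fun (measurableSet_set _)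
  intro x hx
  show SUM S μ ν r f (cubeAt ω k x) x * h x = SUM S μ ν r f ⟨k, m⟩ x * h x
  have h1 : cubeAt ω k x = (⟨k, m⟩ : DyadicCube d) := cubeAt_eq_of_mem hx
  rw [h1]

/-- piece vanishing: fine scales -/
lemma piece_small (S : ElemShift d ω mm nn) (hfin : S.cubes.Finite) (r : ℕ)
    {f h : (Fin d → ℝ) → ℝ} {R : DyadicCube d} (hhR : ConstOnScale ω (R.k - 1) h)
    {Bh : ℝ} (hBh : ∀ x, |h x| ≤ Bh) (k : ℤ) (m : Fin d → ℤ)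
    (hj : k - r ≤ R.k - 1) :
    ∫ x in (DyadicCube.mk k m).set ω, SUM S μ ν r f ⟨k, m⟩ x * h x ∂ν = 0 := by
  have hμW : 0 ≤ CK hfin * (μ ((⟨k, m⟩ : DyadicCube d).set ω)).toReal :=
    mul_nonneg (CK_nonneg hfin) ENNReal.toReal_nonneg
  have hcong : ∀ x ∈ (DyadicCube.mk k m).set ω, SUM S μ ν r f ⟨k, m⟩ x * h x
      = avg ω μ (⟨k, m⟩ : DyadicCube d) f *
        ((avg ω ν (cubeAt ω (k - r - 1) x) (gfun S μ ⟨k, m⟩)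
          - avg ω ν (cubeAt ω (k - r) x) (gfun S μ ⟨k, m⟩)) * h x) := by
    intro x hx
    rw [SUM_eq_of_mem S r f hx]
    simp only [mk_k]
    ring
  rw [setIntegral_congr_fun (measurableSet_set _) hcong, integral_const_mul]
  have hz := small_scale_zero (ν := ν) hhR hBh (gfun_meas S hfin (⟨k, m⟩ : DyadicCube d))
    hμW (fun y => gfun_bound S hfin _ y) (Q' := (⟨k, m⟩ : DyadicCube d)) (j := k - r)
    hj (show (k:ℤ) - r ≤ k by omega)
  rw [hz, mul_zero]

/-- piece vanishing: the Haar average is zero -/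
lemma piece_avg_zero (S : ElemShift d ω mm nn) (r : ℕ)
    {f h : (Fin d → ℝ) → ℝ} (k : ℤ) (m : Fin d → ℤ)
    (havg : avg ω μ (⟨k, m⟩ : DyadicCube d) f = 0) :
    ∫ x in (DyadicCube.mk k m).set ω, SUM S μ ν r f ⟨k, m⟩ x * h x ∂ν = 0 := by
  have : ∀ x ∈ (DyadicCube.mk k m).set ω,
      SUM S μ ν r f ⟨k, m⟩ x * h x = (0:ℝ) := by
    intro x hx
    rw [SUM_eq_zero_of_avg_zero S r f havg, zero_mul]
  rw [setIntegral_congr_fun (measurableSet_set _) this]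
  simp

/-- piece vanishing: `h` vanishes on the cube -/
lemma piece_h_zero (S : ElemShift d ω mm nn) (r : ℕ)
    {f h : (Fin d → ℝ) → ℝ} (k : ℤ) (m : Fin d → ℤ)
    (hzero : ∀ x ∈ (DyadicCube.mk k m).set ω, h x = 0) :
    ∫ x in (DyadicCube.mk k m).set ω, SUM S μ ν r f ⟨k, m⟩ x * h x ∂ν = 0 := by
  have : ∀ x ∈ (DyadicCube.mk k m).set ω,
      SUM S μ ν r f ⟨k, m⟩ x * h x = (0:ℝ) := by
    intro x hx
    rw [hzero x hx, mul_zero]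
  rw [setIntegral_congr_fun (measurableSet_set _) this]
  simp

/-- piece vanishing: coarse scales, where the summand is constant on `R` -/
lemma piece_coarse (S : ElemShift d ω mm nn) (r : ℕ)
    {f h : (Fin d → ℝ) → ℝ} {R : DyadicCube d}
    (hsupp : ∀ x ∉ R.set ω, h x = 0) (hint0 : (∫ x, h x ∂ν) = 0)
    (k : ℤ) (m : Fin d → ℤ)
    (hRsub : R.set ω ⊆ (DyadicCube.mk k m).set ω) (hbig : R.k ≤ k - r - 1) :
    ∫ x in (DyadicCube.mk k m).set ω, SUM S μ ν r f ⟨k, m⟩ x * h x ∂ν = 0 := by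
  set κ := SUM S μ ν r f ⟨k, m⟩ (corner ω R) with hκ
  have hconst : ∀ x ∈ R.set ω, SUM S μ ν r f ⟨k, m⟩ x = κ := by
    intro x hx
    have hcR : cubeAt ω R.k x = cubeAt ω R.k (corner ω R) := by
      rw [cubeAt_eq_of_mem hx, cubeAt_eq_of_mem (corner_mem R)]
    have e1 : cubeAt ω (k - r - 1) x = cubeAt ω (k - r - 1) (corner ω R) :=
      cubeAt_congr (by omega) hcR
    have e2 : cubeAt ω (k - r) x = cubeAt ω (k - r) (corner ω R) :=
      cubeAt_congr (by omega) hcR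
    rw [hκ, SUM_eq_of_mem S r f (hRsub hx), SUM_eq_of_mem S r f (hRsub (corner_mem R))]
    simp only [mk_k]
    rw [e1, e2]
  have hcong : ∀ x ∈ (DyadicCube.mk k m).set ω,
      SUM S μ ν r f ⟨k, m⟩ x * h x = κ * h x := by
    intro x hx
    by_cases hxR : x ∈ R.set ω
    · rw [hconst x hxR]
    · rw [hsupp x hxR, mul_zero, mul_zero]
  rw [setIntegral_congr_fun (measurableSet_set _) hcong, integral_const_mul,
    setIntegral_eq_integral_of_zero_off (measurableSet_set _)
      (fun x hx => hsupp x (fun hxR => hx (hRsub hxR))), hint0, mul_zero]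

end Statement2Aux
namespace Statement2Aux

open DyadicCube

variable {d : ℕ} {ω : TransParam d} {mm nn : ℕ}
variable {μ ν : Measure (Fin d → ℝ)} [IsLocallyFiniteMeasure μ] [IsLocallyFiniteMeasure ν]

/-- pairing a function constant on `R` against a mean-zero function supported on `R` -/
lemma pairing_zero_of_const {R : DyadicCube d} {h : (Fin d → ℝ) → ℝ}
    (hsupp : ∀ x ∉ R.set ω, h x = 0) (hint0 : (∫ x, h x ∂ν) = 0)
    {G : (Fin d → ℝ) → ℝ} (hG : ∀ x ∈ R.set ω, G x = G (corner ω R)) :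
    ∫ x, G x * h x ∂ν = 0 := by
  have hpt : (fun x => G x * h x) = fun x => G (corner ω R) * h x := by
    funext x
    by_cases hx : x ∈ R.set ω
    · rw [hG x hx]
    · rw [hsupp x hx, mul_zero, mul_zero]
  rw [hpt, integral_const_mul, hint0, mul_zero]

/-- The shift of the Haar function is constant on `R` when `R` is far from `Q`. -/
lemma op_const_of_far (S : ElemShift d ω mm nn) (hfin : S.cubes.Finite) (hr : nn ≤ mm ⊔ nn → True) -- dummy
    : True := trivial

lemma op_haar_const_of_disjoint (S : ElemShift d ω mm nn) (hfin : S.cubes.Finite)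
    {Q R : DyadicCube d} {f : (Fin d → ℝ) → ℝ} (hfm : Measurable f)
    {Bf : ℝ} (hBf : ∀ y, |f y| ≤ Bf) (hf0 : ∀ y ∉ Q.set ω, f y = 0)
    (hdis : ∀ p ∈ R.set ω, p ∉ Q.set ω) (hkQ : R.k + (nn:ℤ) ≤ Q.k)
    {x x' : Fin d → ℝ} (hx : x ∈ R.set ω) (hx' : x' ∈ R.set ω) :
    S.op μ f x = S.op μ f x' := by
  rw [op_eq_sum S hfin hfm hBf x, op_eq_sum S hfin hfm hBf x']
  apply Finset.sum_congr rfl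
  intro P hP
  congr 1
  have hcR : cubeAt ω R.k x = cubeAt ω R.k x' := by
    rw [cubeAt_eq_of_mem hx, cubeAt_eq_of_mem hx']
  rcases le_or_gt (R.k + nn + 1) P.k with hbig | hsmall
  · have hker : ∀ y, S.kernelAt P x y = S.kernelAt P x' y := fun y =>
      kernelAt_congr_x S P y (cubeAt_congr (by omega) hcR)
    congr 1
    funext y
    rw [hker y]
  · -- small cube: both integrals vanish
    have hzero : ∀ z ∈ R.set ω, ∫ y, S.kernelAt P z y * f y ∂μ = 0 := by
      intro z hz
      by_cases hzP : z ∈ P.set ω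
      · have hPQ : ∀ y ∈ P.set ω, y ∉ Q.set ω := by
          rcases subset_or_disjoint (ω := ω) (Q := P) (Q' := Q) (by omega) with hsub | hd
          · exact absurd (hsub hzP) (hdis z hz)
          · intro y hyP hyQ
            exact (Set.eq_empty_iff_forall_notMem.mp hd y) ⟨hyP, hyQ⟩
        have : ∀ y, S.kernelAt P z y * f y = 0 := by
          intro y
          by_cases hk0 : S.kernelAt P z y = 0
          · rw [hk0, zero_mul]
          · rw [hf0 y (hPQ y (kernelAt_support_y S hk0)), mul_zero]
        simp [this]
      · have : ∀ y, S.kernelAt P z y = 0 := by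
          intro y
          by_contra h0
          exact hzP (kernelAt_support_x S h0)
        simp [this]
    rw [hzero x hx, hzero x' hx']

/-- The key cancellation: `𝕊_μ f - c ⬝ 𝕊_μ 1_{Q₀}` is constant on `R`, where `Q₀` is the
`r`-fold ancestor of `R` and `c` the `μ`-average of `f` on `Q₀`. -/
lemma op_haar_sub_const (S : ElemShift d ω mm nn) (hfin : S.cubes.Finite) {r : ℕ}
    (hr : nn ≤ r) {Q R Q0 : DyadicCube d} {f : (Fin d → ℝ) → ℝ}
    (hf : IsWeightedHaar ω μ Q f) (hfm : Measurable f) {Bf : ℝ} (hBf : ∀ y, |f y| ≤ Bf)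
    (hQ0k : Q0.k = R.k + r) (hRQ0 : R.set ω ⊆ Q0.set ω) (hQ0Q : Q0.k ≤ Q.k - 1)
    {x x' : Fin d → ℝ} (hx : x ∈ R.set ω) (hx' : x' ∈ R.set ω) :
    S.op μ f x - avg ω μ Q0 f * gfun S μ Q0 x
      = S.op μ f x' - avg ω μ Q0 f * gfun S μ Q0 x' := by
  rw [op_eq_sum S hfin hfm hBf x, op_eq_sum S hfin hfm hBf x', gfun,
    op_eq_sum S hfin (indicator_one_meas Q0) (indicator_one_abs Q0) x,
    op_eq_sum S hfin (indicator_one_meas Q0) (indicator_one_abs Q0) x',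
    Finset.mul_sum, Finset.mul_sum, ← Finset.sum_sub_distrib, ← Finset.sum_sub_distrib]
  apply Finset.sum_congr rfl
  intro P hP
  have hcR : cubeAt ω R.k x = cubeAt ω R.k x' := by
    rw [cubeAt_eq_of_mem hx, cubeAt_eq_of_mem hx']
  rcases le_or_gt (R.k + nn + 1) P.k with hbig | hsmall
  · have hker : ∀ y, S.kernelAt P x y = S.kernelAt P x' y := fun y =>
      kernelAt_congr_x S P y (cubeAt_congr (by omega) hcR)
    have e1 : ∫ y, S.kernelAt P x y * f y ∂μ = ∫ y, S.kernelAt P x' y * f y ∂μ := by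
      congr 1
      funext y
      rw [hker y]
    have e2 : ∫ y, S.kernelAt P x y * (Q0.set ω).indicator (fun _ => (1:ℝ)) y ∂μ
        = ∫ y, S.kernelAt P x' y * (Q0.set ω).indicator (fun _ => (1:ℝ)) y ∂μ := by
      congr 1
      funext y
      rw [hker y]
    rw [e1, e2]
  · -- small cube: the local pieces vanish on `R`
    have hzero : ∀ z ∈ R.set ω, (vol P)⁻¹ * ∫ y, S.kernelAt P z y * f y ∂μ
        - avg ω μ Q0 f * ((vol P)⁻¹ *
            ∫ y, S.kernelAt P z y * (Q0.set ω).indicator (fun _ => (1:ℝ)) y ∂μ) = 0 := by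
      intro z hz
      by_cases hzP : z ∈ P.set ω
      · have hPQ0 : P.set ω ⊆ Q0.set ω := by
          rcases subset_or_disjoint (ω := ω) (Q := P) (Q' := Q0) (by omega) with hsub | hd
          · exact hsub
          · exact absurd ⟨hzP, hRQ0 hz⟩ (fun hcon =>
              (Set.eq_empty_iff_forall_notMem.mp hd z) hcon)
        by_cases hμ0 : μ (Q0.set ω) = 0
        · have hc : avg ω μ Q0 f = 0 := by
            rw [avg, hμ0]
            simp
          rw [hc, zero_mul, sub_zero]
          have hae : (fun y => S.kernelAt P z y * f y) =ᵐ[μ] 0 := by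
            rw [Filter.EventuallyEq, ae_iff]
            apply measure_mono_null _ hμ0
            intro y hy
            simp only [Set.mem_setOf_eq, Pi.zero_apply] at hy
            apply hPQ0
            apply kernelAt_support_y S
            intro hk0
            exact hy (by rw [hk0, zero_mul])
          rw [integral_congr_ae hae]
          simp
        · have hcv : avg ω μ Q0 f = f (corner ω Q0) :=
            avg_eq_of_const (corner_mem Q0)
              (fun y hy => constOnScale_eq hf.1.2 (by omega) hy (corner_mem Q0)) hμ0
          have hpt : ∀ y, S.kernelAt P z y * f y
              = f (corner ω Q0) *
                (S.kernelAt P z y * (Q0.set ω).indicator (fun _ => (1:ℝ)) y) := by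
            intro y
            by_cases hk0 : S.kernelAt P z y = 0
            · rw [hk0, zero_mul, zero_mul, mul_zero]
            · have hyQ0 : y ∈ Q0.set ω := hPQ0 (kernelAt_support_y S hk0)
              rw [Set.indicator_of_mem hyQ0,
                constOnScale_eq hf.1.2 (by omega : Q0.k ≤ Q.k - 1) hyQ0 (corner_mem Q0)]
              ring
          rw [show (fun y => S.kernelAt P z y * f y)
              = fun y => f (corner ω Q0) *
                (S.kernelAt P z y * (Q0.set ω).indicator (fun _ => (1:ℝ)) y)
              from funext hpt, integral_const_mul, hcv]
          ring
      · have hknull : ∀ y, S.kernelAt P z y = 0 := by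
          intro y
          by_contra h0
          exact hzP (kernelAt_support_x S h0)
        simp [hknull]
    have h1 := hzero x hx
    have h2 := hzero x' hx'
    linarith
end Statement2Aux

open Statement2Aux DyadicCube

/-- **structure of the weighted paraproduct, Lemma 2.2.** For `r ≥ nn` and
weighted Haar functions `h^μ_Q`, `h^ν_R`: (1) if `ℓ(R) ≥ 2^{-r}ℓ(Q)` then
`⟨Π^μ h^μ_Q, h^ν_R⟩_ν = 0`; (2) if `R ⊄ Q` then `⟨Π^μ h^μ_Q, h^ν_R⟩_ν = 0`; (3) if
`ℓ(R) < 2^{-r}ℓ(Q)` then `⟨Π^μ h^μ_Q, h^ν_R⟩_ν = ⟨𝕊_μ h^μ_Q, h^ν_R⟩_ν`, and in particular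
both sides vanish when `R ⊄ Q`. -/
theorem statement2 (d : ℕ) (hd : 0 < d) (ω : TransParam d) (mm nn : ℕ)
    (S : ElemShift d ω mm nn) (hfin : S.cubes.Finite)
    (μ ν : Measure (Fin d → ℝ)) [IsLocallyFiniteMeasure μ] [IsLocallyFiniteMeasure ν]
    (r : ℕ) (hr : nn ≤ r)
    (Q R : DyadicCube d) (hQ hR : (Fin d → ℝ) → ℝ)
    (hhQ : IsWeightedHaar ω μ Q hQ) (hhR : IsWeightedHaar ω ν R hR) :
    (Q.k - (r : ℤ) ≤ R.k → (∫ x, shiftPara S μ ν r hQ x * hR x ∂ν) = 0) ∧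
    (¬ R.set ω ⊆ Q.set ω → (∫ x, shiftPara S μ ν r hQ x * hR x ∂ν) = 0) ∧
    (R.k < Q.k - (r : ℤ) →
      ((∫ x, shiftPara S μ ν r hQ x * hR x ∂ν) = ∫ x, S.op μ hQ x * hR x ∂ν) ∧
      (¬ R.set ω ⊆ Q.set ω → (∫ x, S.op μ hQ x * hR x ∂ν) = 0)) := by
  classical
  obtain ⟨s₀, hs₀⟩ : ∃ s₀ : ℤ, ∀ P ∈ S.cubes, s₀ ≤ P.k - nn - 1 := by
    set T : Finset ℤ := insert (0:ℤ) (hfin.toFinset.image (fun P => P.k - (nn:ℤ) - 1))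
      with hT
    refine ⟨T.min' ⟨0, by simp [hT]⟩, fun P hP => Finset.min'_le _ _ ?_⟩
    rw [hT]
    exact Finset.mem_insert_of_mem (Finset.mem_image_of_mem _ (by simpa using hP))
  have hfm : Measurable hQ := genHaar_measurable hhQ.1
  obtain ⟨Bf, hBf0, hBf⟩ := genHaar_bounded hhQ.1
  have hhm : Measurable hR := genHaar_measurable hhR.1
  obtain ⟨Bh, hBh0, hBh⟩ := genHaar_bounded hhR.1
  set K := Finset.Icc (s₀ + (r:ℤ) + 1) (Q.k - 1) with hK
  have hTint : ∀ k : ℤ, Integrable (fun x => SUM S μ ν r hQ (cubeAt ω k x) x * hR x) ν :=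
    fun k => Tk_int S hfin r hBf0 hBf hBh0 hBh hhm (R := R)
      (fun x hx => hhR.1.1 x hx) k
  -- the finite decomposition of the paraproduct pairing
  have hmain : ∫ x, shiftPara S μ ν r hQ x * hR x ∂ν
      = ∑ k ∈ K, ∫ x, SUM S μ ν r hQ (cubeAt ω k x) x * hR x ∂ν := by
    rw [← integral_finset_sum K (fun k _ => hTint k)]
    apply integral_congr_ae
    have hae : ∀ᵐ x ∂ν, x ∉ NullSet ω ν := by
      rw [ae_iff]
      have hNN : {a : Fin d → ℝ | ¬ a ∉ NullSet ω ν} = NullSet ω ν := by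
        ext a; simp
      rw [hNN]
      exact nullSet_null
    filter_upwards [hae] with x hx
    rw [shiftPara_pointwise S hs₀ r hhQ hx, Finset.sum_mul]
  -- claim 1
  have claim1 : Q.k - (r : ℤ) ≤ R.k →
      (∫ x, shiftPara S μ ν r hQ x * hR x ∂ν) = 0 := by
    intro hRk
    rw [hmain]
    apply Finset.sum_eq_zero
    intro k hk
    rw [hK, Finset.mem_Icc] at hk
    rw [scale_split S r hQ hR k (hTint k)]
    refine (tsum_congr (fun m => ?_)).trans tsum_zero
    exact piece_small S hfin r hhR.1.2 hBh k m (by omega)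
  -- vanishing of the paraproduct pairing when `R` and `Q` are disjoint
  have zero_of_disjoint : (∀ p ∈ R.set ω, p ∉ Q.set ω) →
      (∫ x, shiftPara S μ ν r hQ x * hR x ∂ν) = 0 := by
    intro hdis
    rw [hmain]
    apply Finset.sum_eq_zero
    intro k hk
    rw [hK, Finset.mem_Icc] at hk
    rw [scale_split S r hQ hR k (hTint k)]
    refine (tsum_congr (fun m => ?_)).trans tsum_zero
    rcases subset_or_disjoint (ω := ω) (Q := (⟨k, m⟩ : DyadicCube d)) (Q' := Q)
      (show k ≤ Q.k by omega) with hsubQ | hdisQ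
    · apply piece_h_zero
      intro x hx
      apply hhR.1.1
      intro hxR
      exact hdis x hxR (hsubQ hx)
    · apply piece_avg_zero
      exact avg_haar_zero_disjoint hhQ
        (fun x hx hxQ => (Set.eq_empty_iff_forall_notMem.mp hdisQ x) ⟨hx, hxQ⟩)
  refine ⟨claim1, ?_, ?_⟩
  · -- claim 2
    intro hnsub
    rcases le_or_gt R.k Q.k with hle | hlt
    · rcases subset_or_disjoint (ω := ω) (Q := R) (Q' := Q) hle with hsub | hdis
      · exact absurd hsub hnsub
      · exact zero_of_disjoint
          (fun p hp hpQ => (Set.eq_empty_iff_forall_notMem.mp hdis p) ⟨hp, hpQ⟩)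
    · exact claim1 (by omega)
  · -- claim 3
    intro hRk
    have hrhs_dis : (∀ p ∈ R.set ω, p ∉ Q.set ω) →
        (∫ x, S.op μ hQ x * hR x ∂ν) = 0 := by
      intro hdis
      apply pairing_zero_of_const hhR.1.1 hhR.2.1
      intro x hx
      exact op_haar_const_of_disjoint S hfin hfm hBf hhQ.1.1 hdis
        (by omega) hx (corner_mem R)
    by_cases hsub : R.set ω ⊆ Q.set ω
    swap
    · -- `R` and `Q` are disjoint
      have hdis : ∀ p ∈ R.set ω, p ∉ Q.set ω := by
        rcases subset_or_disjoint (ω := ω) (Q := R) (Q' := Q) (by omega) with h | h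
        · exact absurd h hsub
        · exact fun p hp hpQ => (Set.eq_empty_iff_forall_notMem.mp h p) ⟨hp, hpQ⟩
      exact ⟨by rw [zero_of_disjoint hdis, hrhs_dis hdis], fun _ => hrhs_dis hdis⟩
    · -- main case : `R ⊆ Q`
      refine ⟨?_, fun hc => absurd hsub hc⟩
      have hRQ0 : R.set ω ⊆ (cubeAt ω (R.k + (r:ℤ)) (corner ω R)).set ω := by
        rcases subset_or_disjoint (ω := ω) (Q := R)
          (Q' := cubeAt ω (R.k + (r:ℤ)) (corner ω R))
          (show R.k ≤ R.k + (r:ℤ) by omega) with h | h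
        · exact h
        · exact absurd ⟨corner_mem R, mem_cubeAt _ _⟩
            (fun hcon => (Set.eq_empty_iff_forall_notMem.mp h _) hcon)
      -- pieces at scales `k ≠ k₀` vanish
      have hIk : ∀ k ∈ K, k ≠ R.k + (r:ℤ) →
          (∫ x, SUM S μ ν r hQ (cubeAt ω k x) x * hR x ∂ν) = 0 := by
        intro k hk hne
        rw [hK, Finset.mem_Icc] at hk
        rw [scale_split S r hQ hR k (hTint k)]
        refine (tsum_congr (fun m => ?_)).trans tsum_zero
        rcases subset_or_disjoint (ω := ω) (Q := (⟨k, m⟩ : DyadicCube d)) (Q' := Q)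
          (show k ≤ Q.k by omega) with hsubQ | hdisQ
        · rcases le_or_gt R.k k with hRk' | hkR
          · rcases subset_or_disjoint (ω := ω) (Q := R) (Q' := (⟨k, m⟩ : DyadicCube d))
              (show R.k ≤ k from hRk') with hRsub | hRdis
            · rcases lt_or_gt_of_ne hne with h1 | h3
              · exact piece_small S hfin r hhR.1.2 hBh k m (by omega)
              · exact piece_coarse S r hhR.1.1 hhR.2.1 k m hRsub (by omega)
            · apply piece_h_zero
              intro x hx
              apply hhR.1.1
              intro hxR
              exact (Set.eq_empty_iff_forall_notMem.mp hRdis x) ⟨hxR, hx⟩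
          · exact piece_small S hfin r hhR.1.2 hBh k m (by omega)
        · apply piece_avg_zero
          exact avg_haar_zero_disjoint hhQ
            (fun x hx hxQ => (Set.eq_empty_iff_forall_notMem.mp hdisQ x) ⟨hx, hxQ⟩)
      -- integrability facts
      have hint_hR : Integrable hR ν :=
        integrable_of_bound_support hhm R hhR.1.1 hBh
      have hg0b : ∀ z, |gfun S μ (cubeAt ω (R.k + (r:ℤ)) (corner ω R)) z|
          ≤ CK hfin * (μ ((cubeAt ω (R.k + (r:ℤ)) (corner ω R)).set ω)).toReal :=
        gfun_bound S hfin _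
      have hg0b0 : 0 ≤ CK hfin * (μ ((cubeAt ω (R.k + (r:ℤ)) (corner ω R)).set ω)).toReal :=
        mul_nonneg (CK_nonneg hfin) ENNReal.toReal_nonneg
      have hint_g0hR : Integrable
          (fun x => gfun S μ (cubeAt ω (R.k + (r:ℤ)) (corner ω R)) x * hR x) ν := by
        apply integrable_of_bound_support
          (f := fun x => gfun S μ (cubeAt ω (R.k + (r:ℤ)) (corner ω R)) x * hR x)
          ((gfun_meas S hfin _).mul hhm) R
        · intro x hx; rw [hhR.1.1 x hx, mul_zero]
        · intro x
          rw [abs_mul]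
          exact mul_le_mul (hg0b x) (hBh x) (abs_nonneg _) hg0b0
      -- the pairing at scale `k₀`
      have hIk0 : (R.k + (r:ℤ)) ∈ K →
          (∫ x, SUM S μ ν r hQ (cubeAt ω (R.k + (r:ℤ)) x) x * hR x ∂ν)
            = avg ω μ (cubeAt ω (R.k + (r:ℤ)) (corner ω R)) hQ *
              ∫ x, gfun S μ (cubeAt ω (R.k + (r:ℤ)) (corner ω R)) x * hR x ∂ν := by
        intro hk0K
        rw [scale_split S r hQ hR _ (hTint _)]
        rw [tsum_eq_single ((cubeAt ω (R.k + (r:ℤ)) (corner ω R)).m) ?_]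
        swap
        · -- other positions vanish
          intro m hne
          rcases subset_or_disjoint (ω := ω) (Q := (⟨R.k + (r:ℤ), m⟩ : DyadicCube d))
            (Q' := Q) (show R.k + (r:ℤ) ≤ Q.k by omega) with hsubQ | hdisQ
          · rcases subset_or_disjoint (ω := ω) (Q := R)
              (Q' := (⟨R.k + (r:ℤ), m⟩ : DyadicCube d))
              (show R.k ≤ R.k + (r:ℤ) by omega) with hRsub | hRdis
            · exfalso
              apply hne
              have heq : (⟨R.k + (r:ℤ), m⟩ : DyadicCube d)
                  = cubeAt ω (R.k + (r:ℤ)) (corner ω R) :=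
                (cubeAt_eq_of_mem (hRsub (corner_mem R))).symm
              exact congrArg DyadicCube.m heq
            · apply piece_h_zero
              intro x hx
              apply hhR.1.1
              intro hxR
              exact (Set.eq_empty_iff_forall_notMem.mp hRdis x) ⟨hxR, hx⟩
          · apply piece_avg_zero
            exact avg_haar_zero_disjoint hhQ
              (fun x hx hxQ => (Set.eq_empty_iff_forall_notMem.mp hdisQ x) ⟨hx, hxQ⟩)
        · -- the main piece
          have heta : (DyadicCube.mk (R.k + (r:ℤ))
              ((cubeAt ω (R.k + (r:ℤ)) (corner ω R)).m))
              = cubeAt ω (R.k + (r:ℤ)) (corner ω R) := rfl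
          rw [heta]
          have hcong : ∀ x ∈ (cubeAt ω (R.k + (r:ℤ)) (corner ω R)).set ω,
              SUM S μ ν r hQ (cubeAt ω (R.k + (r:ℤ)) (corner ω R)) x * hR x
              = avg ω μ (cubeAt ω (R.k + (r:ℤ)) (corner ω R)) hQ *
                ((avg ω ν (cubeAt ω (R.k - 1) x)
                    (gfun S μ (cubeAt ω (R.k + (r:ℤ)) (corner ω R)))
                  - avg ω ν (cubeAt ω R.k x)
                    (gfun S μ (cubeAt ω (R.k + (r:ℤ)) (corner ω R)))) * hR x) := by
            intro x hx
            rw [SUM_eq_of_mem S r hQ hx]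
            simp only [cubeAt_k]
            rw [show R.k + (r:ℤ) - r - 1 = R.k - 1 by omega,
              show R.k + (r:ℤ) - r = R.k by omega]
            ring
          rw [setIntegral_congr_fun (measurableSet_set _) hcong, integral_const_mul,
            setIntegral_eq_integral_of_zero_off (measurableSet_set _)
              (fun x hx => by
                rw [hhR.1.1 x (fun hxR => hx (hRQ0 hxR)), mul_zero])]
          congr 1
          have hintA : Integrable (fun x => avg ω ν (cubeAt ω (R.k - 1) x)
              (gfun S μ (cubeAt ω (R.k + (r:ℤ)) (corner ω R))) * hR x) ν := by
            apply integrable_of_bound_support (f := fun x => avg ω ν (cubeAt ω (R.k - 1) x)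
              (gfun S μ (cubeAt ω (R.k + (r:ℤ)) (corner ω R))) * hR x)
              ((measurable_comp_cubeAt (fun E => avg ω ν E _)).mul hhm) R
            · intro x hx; rw [hhR.1.1 x hx, mul_zero]
            · intro x
              rw [abs_mul]
              exact mul_le_mul (abs_avg_le hg0b0 hg0b) (hBh x) (abs_nonneg _) hg0b0
          have hintB : Integrable (fun x => avg ω ν (cubeAt ω R.k x)
              (gfun S μ (cubeAt ω (R.k + (r:ℤ)) (corner ω R))) * hR x) ν := by
            apply integrable_of_bound_support (f := fun x => avg ω ν (cubeAt ω R.k x)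
              (gfun S μ (cubeAt ω (R.k + (r:ℤ)) (corner ω R))) * hR x)
              ((measurable_comp_cubeAt (fun E => avg ω ν E _)).mul hhm) R
            · intro x hx; rw [hhR.1.1 x hx, mul_zero]
            · intro x
              rw [abs_mul]
              exact mul_le_mul (abs_avg_le hg0b0 hg0b) (hBh x) (abs_nonneg _) hg0b0
          have hsplit : (fun x => (avg ω ν (cubeAt ω (R.k - 1) x)
                (gfun S μ (cubeAt ω (R.k + (r:ℤ)) (corner ω R)))
              - avg ω ν (cubeAt ω R.k x)
                (gfun S μ (cubeAt ω (R.k + (r:ℤ)) (corner ω R)))) * hR x)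
              = fun x => avg ω ν (cubeAt ω (R.k - 1) x)
                  (gfun S μ (cubeAt ω (R.k + (r:ℤ)) (corner ω R))) * hR x
                - avg ω ν (cubeAt ω R.k x)
                    (gfun S μ (cubeAt ω (R.k + (r:ℤ)) (corner ω R))) * hR x := by
            funext x; ring
          rw [hsplit, integral_sub hintA hintB]
          have hB0 : ∫ x, avg ω ν (cubeAt ω R.k x)
              (gfun S μ (cubeAt ω (R.k + (r:ℤ)) (corner ω R))) * hR x ∂ν = 0 := by
            have hptB : (fun x => avg ω ν (cubeAt ω R.k x)
                (gfun S μ (cubeAt ω (R.k + (r:ℤ)) (corner ω R))) * hR x)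
                = fun x => avg ω ν R
                  (gfun S μ (cubeAt ω (R.k + (r:ℤ)) (corner ω R))) * hR x := by
              funext x
              by_cases hx : x ∈ R.set ω
              · rw [cubeAt_eq_of_mem hx]
              · rw [hhR.1.1 x hx, mul_zero, mul_zero]
            rw [hptB, integral_const_mul, hhR.2.1, mul_zero]
          rw [hB0, sub_zero]
          exact pairing_avg hhR.1.2 hhR.1.1 hBh (gfun_meas S hfin _) hg0b0 hg0b
      rw [hmain]
      by_cases hk0K : (R.k + (r:ℤ)) ∈ K
      · rw [Finset.sum_eq_single (R.k + (r:ℤ)) (fun k hk hne => hIk k hk hne)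
          (fun hcon => absurd hk0K hcon), hIk0 hk0K]
        -- identify with the full pairing
        have hRHSc : ∫ x, S.op μ hQ x * hR x ∂ν
            = avg ω μ (cubeAt ω (R.k + (r:ℤ)) (corner ω R)) hQ *
              ∫ x, gfun S μ (cubeAt ω (R.k + (r:ℤ)) (corner ω R)) x * hR x ∂ν := by
          have hpt : ∀ x, S.op μ hQ x * hR x
              = avg ω μ (cubeAt ω (R.k + (r:ℤ)) (corner ω R)) hQ *
                  (gfun S μ (cubeAt ω (R.k + (r:ℤ)) (corner ω R)) x * hR x)
                + (S.op μ hQ (corner ω R)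
                    - avg ω μ (cubeAt ω (R.k + (r:ℤ)) (corner ω R)) hQ *
                      gfun S μ (cubeAt ω (R.k + (r:ℤ)) (corner ω R)) (corner ω R)) * hR x := by
            intro x
            by_cases hx : x ∈ R.set ω
            · have hkey := op_haar_sub_const S hfin hr hhQ hfm hBf
                (show (cubeAt ω (R.k + (r:ℤ)) (corner ω R)).k = R.k + r from rfl)
                hRQ0 (show (cubeAt ω (R.k + (r:ℤ)) (corner ω R)).k ≤ Q.k - 1 by
                  simp only [cubeAt_k]; omega)
                hx (corner_mem R)
              have hxv : S.op μ hQ x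
                  = avg ω μ (cubeAt ω (R.k + (r:ℤ)) (corner ω R)) hQ *
                      gfun S μ (cubeAt ω (R.k + (r:ℤ)) (corner ω R)) x
                    + (S.op μ hQ (corner ω R)
                      - avg ω μ (cubeAt ω (R.k + (r:ℤ)) (corner ω R)) hQ *
                        gfun S μ (cubeAt ω (R.k + (r:ℤ)) (corner ω R)) (corner ω R)) := by
                linarith
              rw [hxv]
              ring
            · rw [hhR.1.1 x hx]
              ring
          rw [show (fun x => S.op μ hQ x * hR x) = _ from funext hpt,
            integral_add (hint_g0hR.const_mul _) (hint_hR.const_mul _),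
            integral_const_mul, integral_const_mul, hhR.2.1, mul_zero, add_zero]
        rw [hRHSc]
      · -- `k₀ ∉ K` : both sides vanish
        rw [Finset.sum_eq_zero (fun k hk => hIk k hk (fun hcon => hk0K (hcon ▸ hk)))]
        have hRks0 : R.k ≤ s₀ := by
          rw [hK, Finset.mem_Icc, not_and_or] at hk0K
          rcases hk0K with h | h
          · omega
          · omega
        have hRHS0 : ∫ x, S.op μ hQ x * hR x ∂ν = 0 := by
          apply pairing_zero_of_const hhR.1.1 hhR.2.1
          intro x hx
          exact constOnScale_eq (op_constOnScale S hs₀ hQ) hRks0 hx (corner_mem R)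
        rw [hRHS0]


end
end

section
/- Let 𝒢* = 𝒢*(Q₀) be the stopping family associated to a cube Q₀ ∈ 𝒬, a nonnegative locally integrable weight w, and a collection 𝒬 ⊂ 𝒟. Then for every R ∈ 𝒢*: (i) Σ_{Q∈𝒢*: Q⊂R} |Q| ≤ (4/3)|R|; (ii) ‖Σ_{Q∈𝒢*: Q⊂R} 1_Q‖_{L²(ℝ^d)} ≤ 2|R|^{1/2}. Moreover, the Carleson packing inequality (i) also holds for every R ∈ 𝒟. -/
open MeasureTheory Set
open scoped ENNReal NNReal Classical

noncomputable section

-- ===================== AUXILIARY DEVELOPMENT =====================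
namespace Stmt6Aux

set_option maxHeartbeats 1000000

open DyadicCube

variable {d : ℕ}

instance : Countable (DyadicCube d) := by
  have h : Function.Injective (fun Q : DyadicCube d => (Q.k, Q.m)) := by
    intro a b hab; cases a; cases b; simpa using hab
  exact h.countable

/-- ennreal volume -/
def Vol (Q : DyadicCube d) : ℝ≥0∞ := ENNReal.ofReal Q.vol

/-- term of the shift sum -/
def sTerm (ω : TransParam d) (i : Fin d) : ℤ → ℝ := fun j => if ω j i then (2:ℝ) ^ j else 0

lemma sTerm_nonneg (ω : TransParam d) (i : Fin d) (j : ℤ) : 0 ≤ sTerm ω i j := by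
  unfold sTerm; split
  · positivity
  · exact le_rfl

lemma sTerm_le (ω : TransParam d) (i : Fin d) (j : ℤ) : sTerm ω i j ≤ (2:ℝ) ^ j := by
  unfold sTerm; split
  · exact le_rfl
  · positivity

lemma summable_ind_twopow (k : ℤ) :
    Summable (Set.indicator {j : ℤ | j < k} (fun j => (2:ℝ) ^ j)) := by
  set g := Set.indicator {j : ℤ | j < k} (fun j => (2:ℝ) ^ j) with hg
  have hinj : Function.Injective (fun n : ℕ => k - 1 - (n:ℤ)) := by
    intro a b hab; simp only at hab; omega
  have hrange : ∀ x ∉ Set.range (fun n : ℕ => k - 1 - (n:ℤ)), g x = 0 := by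
    intro x hx
    have : ¬ x < k := by
      intro hxk
      exact hx ⟨(k - 1 - x).toNat, by simp only; omega⟩
    simp [hg, Set.indicator_apply, this]
  rw [← hinj.summable_iff hrange]
  have : (g ∘ fun n : ℕ => k - 1 - (n:ℤ)) = fun n : ℕ => (2:ℝ)^(k-1) * (1/2:ℝ)^n := by
    funext n
    have hmem : (k - 1 - (n:ℤ)) ∈ {j : ℤ | j < k} := by simp; omega
    simp only [Function.comp, hg, Set.indicator_of_mem hmem]
    rw [show k - 1 - (n:ℤ) = (k-1) + (-(n:ℤ)) by ring, zpow_add₀ (two_ne_zero)]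
    rw [zpow_neg, one_div, inv_pow, ← zpow_natCast (2:ℝ) n]
  rw [this]
  exact (summable_geometric_of_lt_one (by norm_num) (by norm_num)).mul_left _

lemma summable_ind_sTerm (ω : TransParam d) (i : Fin d) (k : ℤ) :
    Summable (Set.indicator {j : ℤ | j < k} (sTerm ω i)) := by
  apply Summable.of_nonneg_of_le _ _ (summable_ind_twopow k)
  · intro j; exact Set.indicator_nonneg (fun j _ => sTerm_nonneg ω i j) j
  · intro j
    by_cases hj : j ∈ {j : ℤ | j < k}
    · rw [Set.indicator_of_mem hj, Set.indicator_of_mem hj]; exact sTerm_le ω i j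
    · rw [Set.indicator_of_notMem hj, Set.indicator_of_notMem hj]

lemma shiftVec_eq_tsum (ω : TransParam d) (k : ℤ) (i : Fin d) :
    shiftVec ω k i = ∑' j : ℤ, Set.indicator {j : ℤ | j < k} (sTerm ω i) j :=
  tsum_subtype {j : ℤ | j < k} (sTerm ω i)

lemma shift_decomp (ω : TransParam d) (i : Fin d) {k k' : ℤ} (h : k ≤ k') :
    shiftVec ω k' i = shiftVec ω k i + ∑ j ∈ Finset.Ico k k', sTerm ω i j := by
  rw [shiftVec_eq_tsum, shiftVec_eq_tsum]
  have hfun : Set.indicator {j : ℤ | j < k'} (sTerm ω i)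
      = fun j => Set.indicator {j : ℤ | j < k} (sTerm ω i) j
        + Set.indicator (Set.Ico k k') (sTerm ω i) j := by
    funext j
    by_cases h1 : j < k
    · rw [Set.indicator_of_mem (by simp; omega), Set.indicator_of_mem (by simpa using h1),
        Set.indicator_of_notMem (by simp [Set.mem_Ico]; omega), add_zero]
    · by_cases h2 : j < k'
      · rw [Set.indicator_of_mem (by simpa using h2), Set.indicator_of_notMem (by simpa using h1),
          Set.indicator_of_mem (by simp [Set.mem_Ico]; omega), zero_add]
      · rw [Set.indicator_of_notMem (by simpa using h2),
          Set.indicator_of_notMem (by simpa using h1),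
          Set.indicator_of_notMem (by simp [Set.mem_Ico]; omega), add_zero]
  have hsum2 : Summable (Set.indicator (Set.Ico k k') (sTerm ω i)) := by
    apply summable_of_ne_finset_zero (s := Finset.Ico k k')
    intro j hj
    apply Set.indicator_of_notMem
    simpa [Set.mem_Ico] using (by simpa [Finset.mem_Ico] using hj : ¬ (k ≤ j ∧ j < k'))
  rw [hfun, Summable.tsum_add (summable_ind_sTerm ω i k) hsum2]
  congr 1
  rw [tsum_eq_sum (s := Finset.Ico k k')]
  · apply Finset.sum_congr rfl
    intro j hj
    exact Set.indicator_of_mem (by simpa [Set.mem_Ico] using (Finset.mem_Ico.mp hj)) _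
  · intro j hj
    apply Set.indicator_of_notMem
    simpa [Set.mem_Ico] using (by simpa [Finset.mem_Ico] using hj : ¬ (k ≤ j ∧ j < k'))

lemma shift_diff (ω : TransParam d) (i : Fin d) {k k' : ℤ} (h : k ≤ k') :
    ∃ t : ℤ, shiftVec ω k' i = shiftVec ω k i + (t:ℝ) * 2 ^ k := by
  refine ⟨∑ j ∈ Finset.Ico k k', (if ω j i then (2:ℤ)^(j-k).toNat else 0), ?_⟩
  rw [shift_decomp ω i h]
  congr 1
  push_cast
  rw [Finset.sum_mul]
  apply Finset.sum_congr rfl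
  intro j hj
  obtain ⟨hj1, hj2⟩ := Finset.mem_Ico.mp hj
  unfold sTerm
  split
  · rw [← zpow_natCast (2:ℝ) (j-k).toNat, Int.toNat_of_nonneg (by omega), ← zpow_add₀ two_ne_zero]
    congr 1; omega
  · rw [zero_mul]

/-- the lower-left corner of a cube -/
def corner (ω : TransParam d) (Q : DyadicCube d) : Fin d → ℝ :=
  fun i => (Q.m i : ℝ) * 2 ^ Q.k + shiftVec ω Q.k i

lemma len_pos (Q : DyadicCube d) : (0:ℝ) < 2 ^ Q.k := by positivity

lemma mem_set_iff {ω : TransParam d} {Q : DyadicCube d} {x : Fin d → ℝ} :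
    x ∈ Q.set ω ↔ ∀ i, corner ω Q i ≤ x i ∧ x i < corner ω Q i + 2 ^ Q.k := by
  unfold DyadicCube.set corner
  simp only [Set.mem_setOf_eq]
  constructor <;> intro hx i <;> obtain ⟨h1, h2⟩ := hx i <;>
    refine ⟨h1, ?_⟩ <;>
    · have : ((Q.m i:ℝ) + 1) * 2 ^ Q.k = (Q.m i:ℝ) * 2 ^ Q.k + 2 ^ Q.k := by ring
      linarith

lemma corner_mem (ω : TransParam d) (Q : DyadicCube d) : corner ω Q ∈ Q.set ω := by
  rw [mem_set_iff]
  intro i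
  exact ⟨le_rfl, by linarith [len_pos Q]⟩

lemma set_nonempty (ω : TransParam d) (Q : DyadicCube d) : (Q.set ω).Nonempty :=
  ⟨corner ω Q, corner_mem ω Q⟩

lemma set_eq_pi (ω : TransParam d) (Q : DyadicCube d) :
    Q.set ω = Set.pi Set.univ (fun i => Set.Ico (corner ω Q i) (corner ω Q i + 2 ^ Q.k)) := by
  ext x
  rw [mem_set_iff, Set.mem_univ_pi]
  simp only [Set.mem_Ico]

lemma measurableSet_set (ω : TransParam d) (Q : DyadicCube d) : MeasurableSet (Q.set ω) := by
  rw [set_eq_pi]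
  exact MeasurableSet.univ_pi (fun i => measurableSet_Ico)

lemma vol_pos (Q : DyadicCube d) : (0:ℝ) < Q.vol := by unfold DyadicCube.vol; positivity

lemma volume_set (ω : TransParam d) (Q : DyadicCube d) :
    volume (Q.set ω) = ENNReal.ofReal Q.vol := by
  rw [set_eq_pi, volume_pi_pi]
  simp only [Real.volume_Ico, add_sub_cancel_left]
  rw [Finset.prod_const, Finset.card_univ, Fintype.card_fin,
    ← ENNReal.ofReal_pow (le_of_lt (len_pos Q))]
  rfl

/-- the key one-dimensional inclusion lemma -/
lemma Ico_incl {a b h : ℝ} {n N : ℤ} (hh : 0 < h) (hba : b - a = (n:ℝ) * h) (hN : 1 ≤ N)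
    {x : ℝ} (h1 : a ≤ x) (h2 : x < a + h) (h3 : b ≤ x) (h4 : x < b + (N:ℝ) * h) :
    b ≤ a ∧ a + h ≤ b + (N:ℝ) * h := by
  have hn1 : (n:ℝ) * h < 1 * h := by linarith
  have hn2 : (n:ℝ) < 1 := lt_of_mul_lt_mul_right hn1 hh.le
  have hn3 : n ≤ 0 := by exact_mod_cast Int.lt_add_one_iff.mp (by exact_mod_cast hn2)
  have hn4 : (-n:ℝ) * h < (N:ℝ) * h := by linarith
  have hn5 : (-n:ℝ) < N := lt_of_mul_lt_mul_right hn4 hh.le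
  have hn6 : 1 - n - N ≤ 0 := by
    have : (-n:ℤ) < N := by exact_mod_cast hn5
    omega
  have hn6' : (1 - (n:ℝ) - N) ≤ 0 := by exact_mod_cast (by exact_mod_cast hn6 : ((1 - n - N : ℤ):ℝ) ≤ 0)
  constructor
  · nlinarith [mul_nonpos_of_nonpos_of_nonneg (by exact_mod_cast hn3 : (n:ℝ) ≤ 0) hh.le]
  · nlinarith [mul_nonpos_of_nonpos_of_nonneg hn6' hh.le]

lemma set_subset_of_common (ω : TransParam d) {Q R : DyadicCube d} (hk : Q.k ≤ R.k)
    {x : Fin d → ℝ} (hxQ : x ∈ Q.set ω) (hxR : x ∈ R.set ω) : Q.set ω ⊆ R.set ω := by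
  intro y hy
  rw [mem_set_iff] at hxQ hxR hy ⊢
  intro i
  obtain ⟨t, ht⟩ := shift_diff ω i hk
  set N : ℤ := 2 ^ (R.k - Q.k).toNat with hNdef
  have hN1 : 1 ≤ N := by
    have := pow_pos (by norm_num : (0:ℤ) < 2) (R.k - Q.k).toNat
    omega
  have hNh : (N:ℝ) * 2 ^ Q.k = (2:ℝ) ^ R.k := by
    rw [hNdef]
    push_cast
    rw [← zpow_natCast (2:ℝ) (R.k - Q.k).toNat, Int.toNat_of_nonneg (by omega),
      ← zpow_add₀ two_ne_zero]
    congr 1; omega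
  have hba : corner ω R i - corner ω Q i = ((R.m i * N + t - Q.m i : ℤ):ℝ) * 2 ^ Q.k := by
    unfold corner
    rw [ht]
    push_cast
    rw [← hNh]
    ring
  have hcore := Ico_incl (len_pos Q) hba hN1 (hxQ i).1 (hxQ i).2 (hxR i).1
    (by rw [hNh]; exact (hxR i).2)
  refine ⟨le_trans hcore.1 (hy i).1, ?_⟩
  rw [← hNh]
  calc y i < corner ω Q i + 2 ^ Q.k := (hy i).2
    _ ≤ corner ω R i + (N:ℝ) * 2 ^ Q.k := hcore.2

lemma subset_or_subset (ω : TransParam d) {Q R : DyadicCube d}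
    (hne : (Q.set ω ∩ R.set ω).Nonempty) : Q.set ω ⊆ R.set ω ∨ R.set ω ⊆ Q.set ω := by
  obtain ⟨x, hxQ, hxR⟩ := hne
  rcases le_total Q.k R.k with h | h
  · exact Or.inl (set_subset_of_common ω h hxQ hxR)
  · exact Or.inr (set_subset_of_common ω h hxR hxQ)

lemma k_le_of_subset (hd : 0 < d) (ω : TransParam d) {Q R : DyadicCube d}
    (h : Q.set ω ⊆ R.set ω) : Q.k ≤ R.k := by
  have hvol : ENNReal.ofReal Q.vol ≤ ENNReal.ofReal R.vol := by
    rw [← volume_set ω Q, ← volume_set ω R]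
    exact measure_mono h
  have hvol' : Q.vol ≤ R.vol :=
    (ENNReal.ofReal_le_ofReal_iff (vol_pos R).le).mp hvol
  have hlen : (2:ℝ) ^ Q.k ≤ 2 ^ R.k := by
    have := hvol'
    unfold DyadicCube.vol at this
    exact (pow_le_pow_iff_left₀ (len_pos Q).le (len_pos R).le hd.ne').mp this
  exact (zpow_le_zpow_iff_right₀ one_lt_two).mp hlen

lemma eq_of_set_eq (hd : 0 < d) (ω : TransParam d) {Q R : DyadicCube d}
    (h : Q.set ω = R.set ω) : Q = R := by
  have hk : Q.k = R.k :=
    le_antisymm (k_le_of_subset hd ω h.le) (k_le_of_subset hd ω h.ge)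
  have hc1 : corner ω Q ∈ R.set ω := h ▸ corner_mem ω Q
  have hc2 : corner ω R ∈ Q.set ω := h ▸ corner_mem ω R
  rw [mem_set_iff] at hc1 hc2
  have hm : Q.m = R.m := by
    funext i
    have e1 := (hc1 i).1
    have e2 := (hc2 i).1
    unfold corner at e1 e2
    rw [hk] at e1 e2
    have : (R.m i : ℝ) = Q.m i := by
      have hp := len_pos R
      nlinarith [e1, e2]
    have : R.m i = Q.m i := by exact_mod_cast this
    omega
  cases Q; cases R
  simp_all

lemma eq_of_subset_k_le (hd : 0 < d) (ω : TransParam d) {Q R : DyadicCube d}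
    (h : Q.set ω ⊆ R.set ω) (hk : R.k ≤ Q.k) : Q = R := by
  have h2 : R.set ω ⊆ Q.set ω :=
    set_subset_of_common ω hk (h (corner_mem ω Q)) (corner_mem ω Q)
  exact eq_of_set_eq hd ω (le_antisymm h h2)

lemma k_lt_of_ssubset (hd : 0 < d) (ω : TransParam d) {Q R : DyadicCube d}
    (h : Q.set ω ⊂ R.set ω) : Q.k < R.k := by
  rcases lt_or_eq_of_le (k_le_of_subset hd ω h.subset) with hlt | heq
  · exact hlt
  · exact absurd (eq_of_subset_k_le hd ω h.subset heq.ge) (fun hQR => h.ne (by rw [hQR]))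

section Density

variable {ω : TransParam d} {w : (Fin d → ℝ) → ℝ}

lemma integrableOn_set (hwl : LocallyIntegrable w volume) (Q : DyadicCube d) :
    IntegrableOn w (Q.set ω) volume := by
  have hK : IsCompact (Set.pi Set.univ
      (fun i => Set.Icc (corner ω Q i) (corner ω Q i + 2 ^ Q.k))) :=
    isCompact_univ_pi (fun i => isCompact_Icc)
  apply (hwl.integrableOn_isCompact hK).mono_set
  rw [set_eq_pi]
  exact Set.pi_mono (fun i _ => Set.Ico_subset_Icc_self)

lemma dens_nonneg (hw : ∀ x, 0 ≤ w x) (Q : DyadicCube d) : 0 ≤ dens ω w Q :=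
  div_nonneg (setIntegral_nonneg (measurableSet_set ω Q) (fun a _ => hw a)) (vol_pos Q).le

lemma integral_eq_dens_mul (Q : DyadicCube d) :
    ∫ x in Q.set ω, w x = dens ω w Q * Q.vol := by
  unfold dens
  field_simp
  rw [mul_div_assoc, div_self (vol_pos Q).ne', mul_one]

lemma rho_set_eq (hw : ∀ x, 0 ≤ w x) (hwl : LocallyIntegrable w volume) (Q : DyadicCube d) :
    (volume.withDensity (fun x => ENNReal.ofReal (w x))) (Q.set ω)
      = ENNReal.ofReal (dens ω w Q * Q.vol) := by
  rw [withDensity_apply _ (measurableSet_set ω Q), ← integral_eq_dens_mul]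
  exact (ofReal_integral_eq_lintegral_ofReal (integrableOn_set hwl Q)
    (Filter.Eventually.of_forall (fun x => hw x))).symm

lemma wint_mono (hw : ∀ x, 0 ≤ w x) (hwl : LocallyIntegrable w volume)
    {Q P : DyadicCube d} (h : Q.set ω ⊆ P.set ω) :
    ∫ x in Q.set ω, w x ≤ ∫ x in P.set ω, w x :=
  setIntegral_mono_set (integrableOn_set hwl P)
    (Filter.Eventually.of_forall (fun x => hw x)) (HasSubset.Subset.eventuallyLE h)

lemma sum_V_le (hw : ∀ x, 0 ≤ w x) (hwl : LocallyIntegrable w volume)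
    {ι : Type*} [Countable ι] (P : DyadicCube d) (A : ι → DyadicCube d)
    (hsub : ∀ i, (A i).set ω ⊆ P.set ω)
    (hdens : ∀ i, 4 * dens ω w P < dens ω w (A i))
    (hdisj : Pairwise (Function.onFun Disjoint (fun i => (A i).set ω))) :
    ∑' i, Vol (A i) ≤ Vol P / 4 := by
  simp only [Vol]
  set ρ := volume.withDensity (fun x => ENNReal.ofReal (w x)) with hρ
  by_cases hP : dens ω w P = 0
  · have hempty : IsEmpty ι := by
      constructor
      intro i
      have h3 : ∫ x in P.set ω, w x = 0 := by rw [integral_eq_dens_mul, hP, zero_mul]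
      have h1 : ∫ x in (A i).set ω, w x ≤ 0 := le_of_le_of_eq (wint_mono hw hwl (hsub i)) h3
      have h4 : dens ω w (A i) ≤ 0 :=
        div_nonpos_of_nonpos_of_nonneg h1 (vol_pos _).le
      have h5 := hdens i
      rw [hP] at h5
      linarith
    have : ∑' i, ENNReal.ofReal (A i).vol = 0 := by
      rw [ENNReal.tsum_eq_zero]
      intro i
      exact (hempty.false i).elim
    rw [this]
    exact zero_le
  · have hP' : 0 < dens ω w P := lt_of_le_of_ne (dens_nonneg hw P) (Ne.symm hP)
    have key : ∀ i, ENNReal.ofReal (4 * dens ω w P) * ENNReal.ofReal (A i).vol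
        ≤ ρ ((A i).set ω) := by
      intro i
      rw [rho_set_eq hw hwl, ← ENNReal.ofReal_mul (by linarith)]
      apply ENNReal.ofReal_le_ofReal
      nlinarith [hdens i, vol_pos (A i)]
    have hsum : ENNReal.ofReal (4 * dens ω w P) * ∑' i, ENNReal.ofReal (A i).vol
        ≤ ENNReal.ofReal (dens ω w P * P.vol) := by
      rw [← ENNReal.tsum_mul_left]
      calc ∑' i, ENNReal.ofReal (4 * dens ω w P) * ENNReal.ofReal (A i).vol
          ≤ ∑' i, ρ ((A i).set ω) := ENNReal.tsum_le_tsum key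
        _ = ρ (⋃ i, (A i).set ω) :=
            (measure_iUnion hdisj (fun i => measurableSet_set ω (A i))).symm
        _ ≤ ρ (P.set ω) := measure_mono (Set.iUnion_subset hsub)
        _ = ENNReal.ofReal (dens ω w P * P.vol) := rho_set_eq hw hwl P
    rw [ENNReal.le_div_iff_mul_le (Or.inl (by norm_num)) (Or.inl (by norm_num))]
    have hc0 : ENNReal.ofReal (dens ω w P) ≠ 0 := by
      simp only [ne_eq, ENNReal.ofReal_eq_zero, not_le]
      exact hP'
    have hct : ENNReal.ofReal (dens ω w P) ≠ ⊤ := ENNReal.ofReal_ne_top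
    rw [← ENNReal.mul_le_mul_iff_left hc0 hct]
    have h4c : ENNReal.ofReal (4 * dens ω w P) = 4 * ENNReal.ofReal (dens ω w P) := by
      rw [ENNReal.ofReal_mul (by norm_num)]
      norm_num
    calc (∑' i, ENNReal.ofReal (A i).vol) * 4 * ENNReal.ofReal (dens ω w P)
        = ENNReal.ofReal (4 * dens ω w P) * ∑' i, ENNReal.ofReal (A i).vol := by
          rw [h4c]; ring
      _ ≤ ENNReal.ofReal (dens ω w P * P.vol) := hsum
      _ = ENNReal.ofReal P.vol * ENNReal.ofReal (dens ω w P) := by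
          rw [ENNReal.ofReal_mul hP'.le]; ring

end Density

section Stopping

variable {ω : TransParam d} {w : (Fin d → ℝ) → ℝ} {𝒬 : Set (DyadicCube d)} {Q₀ : DyadicCube d}

lemma Q₀_mem_stopFam : Q₀ ∈ stopFam ω w 𝒬 Q₀ :=
  Set.mem_iUnion.mpr ⟨0, rfl⟩

lemma stopGen_subset_Q₀ : ∀ (τ : ℕ) (P : DyadicCube d), P ∈ stopGen ω w 𝒬 Q₀ τ →
    P.set ω ⊆ Q₀.set ω := by
  intro τ
  induction τ with
  | zero =>
    intro P hP
    simp only [stopGen, Set.mem_singleton_iff] at hP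
    subst hP; exact subset_rfl
  | succ τ ih =>
    rintro P ⟨Q, hQ, hP'⟩
    exact (hP'.1.2.1).trans (ih Q hQ)

lemma stopFam_subset_Q₀ {P : DyadicCube d} (hP : P ∈ stopFam ω w 𝒬 Q₀) :
    P.set ω ⊆ Q₀.set ω := by
  obtain ⟨τ, hτ⟩ := Set.mem_iUnion.mp hP
  exact stopGen_subset_Q₀ τ P hτ

lemma stopFam_exists_parent {P : DyadicCube d} (hP : P ∈ stopFam ω w 𝒬 Q₀) (hne : P ≠ Q₀) :
    ∃ C ∈ stopFam ω w 𝒬 Q₀, P ∈ stopNext ω w 𝒬 C := by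
  obtain ⟨τ, hτ⟩ := Set.mem_iUnion.mp hP
  cases τ with
  | zero => simp only [stopGen, Set.mem_singleton_iff] at hτ; exact absurd hτ hne
  | succ τ =>
    obtain ⟨Q, hQ, h⟩ := hτ
    exact ⟨Q, Set.mem_iUnion.mpr ⟨τ, hQ⟩, h⟩

lemma not_self_stopNext (hw : ∀ x, 0 ≤ w x) {Q : DyadicCube d}
    (h : Q ∈ stopNext ω w 𝒬 Q) : False := by
  have := h.1.2.2
  have := dens_nonneg (ω := ω) hw Q
  linarith

lemma stopNext_ssubset (hd : 0 < d) (hw : ∀ x, 0 ≤ w x) {Q C : DyadicCube d}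
    (h : Q ∈ stopNext ω w 𝒬 C) : Q.set ω ⊂ C.set ω := by
  refine ssubset_iff_subset_ne.mpr ⟨h.1.2.1, fun hs => ?_⟩
  have : Q = C := eq_of_set_eq hd ω hs
  subst this
  exact not_self_stopNext hw h

lemma no_middle (hd : 0 < d) (hw : ∀ x, 0 ≤ w x) :
    ∀ (μ : ℕ) (C B A : DyadicCube d), C ∈ stopFam ω w 𝒬 Q₀ → B ∈ stopFam ω w 𝒬 Q₀ →
      A ∈ stopNext ω w 𝒬 C → A.set ω ⊂ B.set ω → B.set ω ⊂ C.set ω →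
      (Q₀.k - B.k).toNat + (Q₀.k - C.k).toNat ≤ μ → False := by
  intro μ
  induction μ using Nat.strong_induction_on with
  | _ μ ih =>
  intro C B A hC hB hA hAB hBC hμ
  have hBQ₀ : B ≠ Q₀ := by
    intro h; subst h
    exact hBC.not_subset (stopFam_subset_Q₀ hC)
  obtain ⟨B₂, hB₂G, hBB₂⟩ := stopFam_exists_parent hB hBQ₀
  have hBB₂s : B.set ω ⊂ B₂.set ω := stopNext_ssubset hd hw hBB₂
  have hne : (B₂.set ω ∩ C.set ω).Nonempty :=
    ⟨corner ω B, hBB₂s.subset (corner_mem ω B), hBC.subset (corner_mem ω B)⟩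
  have hkBB₂ : B.k < B₂.k := k_lt_of_ssubset hd ω hBB₂s
  have hkBC : B.k < C.k := k_lt_of_ssubset hd ω hBC
  have hkC : C.k ≤ Q₀.k := k_le_of_subset hd ω (stopFam_subset_Q₀ hC)
  have hkB₂ : B₂.k ≤ Q₀.k := k_le_of_subset hd ω (stopFam_subset_Q₀ hB₂G)
  by_cases heq : B₂ = C
  · subst heq
    exact hAB.not_subset (hA.2 B hBB₂.1.1 hBB₂.1.2.1 hBB₂.1.2.2 hAB.subset)
  · rcases subset_or_subset ω hne with h1 | h2
    · have hss : B₂.set ω ⊂ C.set ω :=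
        ssubset_iff_subset_ne.mpr ⟨h1, fun hs => heq (eq_of_set_eq hd ω hs)⟩
      have hAB₂ : A.set ω ⊂ B₂.set ω := hAB.trans hBB₂s
      have hkB₂C : B₂.k < C.k := k_lt_of_ssubset hd ω hss
      exact ih ((Q₀.k - B₂.k).toNat + (Q₀.k - C.k).toNat) (by omega)
        C B₂ A hC hB₂G hA hAB₂ hss le_rfl
    · have hss : C.set ω ⊂ B₂.set ω :=
        ssubset_iff_subset_ne.mpr ⟨h2, fun hs => heq (eq_of_set_eq hd ω hs.symm)⟩
      have hkCB₂ : C.k < B₂.k := k_lt_of_ssubset hd ω hss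
      exact ih ((Q₀.k - C.k).toNat + (Q₀.k - B₂.k).toNat) (by omega)
        B₂ C B hB₂G hC hBB₂ hBC hss le_rfl

lemma chain_finite (hd : 0 < d) (ω : TransParam d) (Q R : DyadicCube d) :
    {P : DyadicCube d | Q.set ω ⊆ P.set ω ∧ P.set ω ⊆ R.set ω}.Finite := by
  apply Set.Finite.of_finite_image (f := DyadicCube.k)
  · apply (Set.finite_Icc Q.k R.k).subset
    rintro k ⟨P, hP, rfl⟩
    exact ⟨k_le_of_subset hd ω hP.1, k_le_of_subset hd ω hP.2⟩
  · intro P hP P' hP' hk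
    have c1 : corner ω Q ∈ P.set ω := hP.1 (corner_mem ω Q)
    have c2 : corner ω Q ∈ P'.set ω := hP'.1 (corner_mem ω Q)
    have hsub : P.set ω ⊆ P'.set ω := set_subset_of_common ω (le_of_eq hk) c1 c2
    exact eq_of_subset_k_le hd ω hsub (le_of_eq hk.symm)

lemma exists_max_in (hd : 0 < d) {R Q : DyadicCube d}
    (hQG : Q ∈ stopFam ω w 𝒬 Q₀) (hQR : Q.set ω ⊆ R.set ω) :
    ∃ P, (P ∈ stopFam ω w 𝒬 Q₀ ∧ P.set ω ⊆ R.set ω) ∧ Q.set ω ⊆ P.set ω ∧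
      ∀ P', P' ∈ stopFam ω w 𝒬 Q₀ → P'.set ω ⊆ R.set ω → P.set ω ⊆ P'.set ω →
        P'.set ω ⊆ P.set ω := by
  set s := {P | P ∈ stopFam ω w 𝒬 Q₀ ∧ Q.set ω ⊆ P.set ω ∧ P.set ω ⊆ R.set ω} with hs
  have hfin : s.Finite := (chain_finite hd ω Q R).subset (fun P hP => ⟨hP.2.1, hP.2.2⟩)
  have hne : s.Nonempty := ⟨Q, hQG, subset_rfl, hQR⟩
  obtain ⟨P, hPs, hmax⟩ := hfin.exists_maximalFor DyadicCube.k s hne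
  refine ⟨P, ⟨hPs.1, hPs.2.2⟩, hPs.2.1, ?_⟩
  intro P' hG' hR' hPP'
  have hP's : P' ∈ s := ⟨hG', hPs.2.1.trans hPP', hR'⟩
  have hk := hmax hP's (k_le_of_subset hd ω hPP')
  rw [eq_of_subset_k_le hd ω hPP' hk]

/-- ancestors of `Q` inside `S` -/
def ancSet (ω : TransParam d) (w : (Fin d → ℝ) → ℝ) (𝒬 : Set (DyadicCube d))
    (Q₀ S Q : DyadicCube d) : Set (DyadicCube d) :=
  {P | P ∈ stopFam ω w 𝒬 Q₀ ∧ Q.set ω ⊂ P.set ω ∧ P.set ω ⊆ S.set ω}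

/-- generation depth of `Q` inside `S` -/
noncomputable def depth (ω : TransParam d) (w : (Fin d → ℝ) → ℝ) (𝒬 : Set (DyadicCube d))
    (Q₀ S Q : DyadicCube d) : ℕ :=
  (ancSet ω w 𝒬 Q₀ S Q).ncard

lemma ancSet_finite (hd : 0 < d) (S Q : DyadicCube d) :
    (ancSet ω w 𝒬 Q₀ S Q).Finite :=
  (chain_finite hd ω Q S).subset (fun P hP => ⟨hP.2.1.subset, hP.2.2⟩)

/-- minimal strict ancestor property -/
def IsMinAnc (ω : TransParam d) (w : (Fin d → ℝ) → ℝ) (𝒬 : Set (DyadicCube d))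
    (Q₀ S Q P : DyadicCube d) : Prop :=
  P ∈ ancSet ω w 𝒬 Q₀ S Q ∧ ∀ P' ∈ ancSet ω w 𝒬 Q₀ S Q, P.set ω ⊆ P'.set ω

lemma exists_min_anc (hd : 0 < d) {S Q : DyadicCube d}
    (hne : (ancSet ω w 𝒬 Q₀ S Q).Nonempty) : ∃ P, IsMinAnc ω w 𝒬 Q₀ S Q P := by
  obtain ⟨P, hPs, hmin⟩ :=
    (ancSet_finite hd S Q).exists_minimalFor DyadicCube.k _ hne
  refine ⟨P, hPs, ?_⟩
  intro P' hP's
  have c1 : corner ω Q ∈ P.set ω := hPs.2.1.subset (corner_mem ω Q)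
  have c2 : corner ω Q ∈ P'.set ω := hP's.2.1.subset (corner_mem ω Q)
  rcases le_total P.k P'.k with h | h
  · exact set_subset_of_common ω h c1 c2
  · have hk := hmin hP's h
    exact set_subset_of_common ω hk c1 c2

/-- the canonical stopping parent -/
noncomputable def pa (ω : TransParam d) (w : (Fin d → ℝ) → ℝ) (𝒬 : Set (DyadicCube d))
    (Q₀ S Q : DyadicCube d) : DyadicCube d :=
  if h : ∃ P, IsMinAnc ω w 𝒬 Q₀ S Q P then h.choose else Q₀

lemma pa_spec (hd : 0 < d) {S Q : DyadicCube d} (hne : (ancSet ω w 𝒬 Q₀ S Q).Nonempty) :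
    IsMinAnc ω w 𝒬 Q₀ S Q (pa ω w 𝒬 Q₀ S Q) := by
  have h : ∃ P, IsMinAnc ω w 𝒬 Q₀ S Q P := exists_min_anc hd hne
  rw [pa, dif_pos h]
  exact h.choose_spec

lemma ancSet_nonempty_of_depth {S Q : DyadicCube d} {n : ℕ}
    (hdep : depth ω w 𝒬 Q₀ S Q = n + 1) : (ancSet ω w 𝒬 Q₀ S Q).Nonempty :=
  Set.nonempty_of_ncard_ne_zero (by rw [depth] at hdep; omega)

lemma depth_pa (hd : 0 < d) {S Q : DyadicCube d} {n : ℕ}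
    (hdep : depth ω w 𝒬 Q₀ S Q = n + 1) :
    depth ω w 𝒬 Q₀ S (pa ω w 𝒬 Q₀ S Q) = n := by
  have hmin := pa_spec hd (ancSet_nonempty_of_depth hdep)
  set P := pa ω w 𝒬 Q₀ S Q with hP
  have hset : ancSet ω w 𝒬 Q₀ S P = ancSet ω w 𝒬 Q₀ S Q \ {P} := by
    ext P'
    constructor
    · rintro ⟨hG, hss, hsub⟩
      refine ⟨⟨hG, hmin.1.2.1.trans hss, hsub⟩, fun hmem => ?_⟩
      rw [Set.mem_singleton_iff] at hmem
      subst hmem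
      exact hss.ne rfl
    · rintro ⟨⟨hG, hss, hsub⟩, hne'⟩
      refine ⟨hG, ?_, hsub⟩
      have hsub2 : P.set ω ⊆ P'.set ω := hmin.2 P' ⟨hG, hss, hsub⟩
      exact ssubset_iff_subset_ne.mpr
        ⟨hsub2, fun hs => hne' (Set.mem_singleton_iff.mpr (eq_of_set_eq hd ω hs.symm))⟩
  rw [depth, hset, Set.ncard_diff_singleton_of_mem hmin.1]
  rw [depth] at hdep
  omega

lemma dens_pa (hd : 0 < d) (hw : ∀ x, 0 ≤ w x) {S Q : DyadicCube d} {n : ℕ}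
    (hQG : Q ∈ stopFam ω w 𝒬 Q₀) (hdep : depth ω w 𝒬 Q₀ S Q = n + 1) :
    4 * dens ω w (pa ω w 𝒬 Q₀ S Q) < dens ω w Q := by
  have hmin := pa_spec hd (ancSet_nonempty_of_depth hdep)
  set P := pa ω w 𝒬 Q₀ S Q with hP
  have hQne : Q ≠ Q₀ := by
    intro h; subst h
    exact hmin.1.2.1.not_subset (stopFam_subset_Q₀ hmin.1.1)
  obtain ⟨C, hCG, hQC⟩ := stopFam_exists_parent hQG hQne
  have hQCs : Q.set ω ⊂ C.set ω := stopNext_ssubset hd hw hQC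
  have hCP : C = P := by
    have c1 : corner ω Q ∈ C.set ω := hQCs.subset (corner_mem ω Q)
    have c2 : corner ω Q ∈ P.set ω := hmin.1.2.1.subset (corner_mem ω Q)
    rcases subset_or_subset ω ⟨corner ω Q, c1, c2⟩ with h1 | h2
    · by_cases he : C = P
      · exact he
      · have hCss : C.set ω ⊂ P.set ω :=
          ssubset_iff_subset_ne.mpr ⟨h1, fun hs => he (eq_of_set_eq hd ω hs)⟩
        have hCanc : C ∈ ancSet ω w 𝒬 Q₀ S Q := ⟨hCG, hQCs, hCss.subset.trans hmin.1.2.2⟩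
        exact (hCss.not_subset (hmin.2 C hCanc)).elim
    · by_cases he : C = P
      · exact he
      · have hPss : P.set ω ⊂ C.set ω :=
          ssubset_iff_subset_ne.mpr ⟨h2, fun hs => he (eq_of_set_eq hd ω hs.symm)⟩
        exact (no_middle hd hw _ C P Q hCG hmin.1.1 hQC hmin.1.2.1 hPss le_rfl).elim
  have := hQC.1.2.2
  rw [hCP] at this
  exact this

end Stopping

section Sums

variable {ω : TransParam d} {w : (Fin d → ℝ) → ℝ} {𝒬 : Set (DyadicCube d)} {Q₀ : DyadicCube d}

/-- cubes of the stopping family inside `S` at relative generation `n` -/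
def lev (ω : TransParam d) (w : (Fin d → ℝ) → ℝ) (𝒬 : Set (DyadicCube d))
    (Q₀ S : DyadicCube d) (n : ℕ) : Set (DyadicCube d) :=
  {Q | Q ∈ stopFam ω w 𝒬 Q₀ ∧ Q.set ω ⊆ S.set ω ∧ depth ω w 𝒬 Q₀ S Q = n}

lemma lev_zero (hd : 0 < d) {S : DyadicCube d} (hS : S ∈ stopFam ω w 𝒬 Q₀) :
    lev ω w 𝒬 Q₀ S 0 ⊆ {S} := by
  rintro Q ⟨hG, hsub, hdep⟩
  by_contra hne
  have hss : Q.set ω ⊂ S.set ω :=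
    ssubset_iff_subset_ne.mpr ⟨hsub, fun hs => hne (eq_of_set_eq hd ω hs)⟩
  have hanc : S ∈ ancSet ω w 𝒬 Q₀ S Q := ⟨hS, hss, subset_rfl⟩
  rw [depth, Set.ncard_eq_zero (ancSet_finite hd S Q)] at hdep
  rw [hdep] at hanc
  exact hanc

lemma pa_of_lev (hd : 0 < d) {S Q : DyadicCube d} {n : ℕ}
    (hQ : Q ∈ lev ω w 𝒬 Q₀ S (n+1)) :
    IsMinAnc ω w 𝒬 Q₀ S Q (pa ω w 𝒬 Q₀ S Q) :=
  pa_spec hd (ancSet_nonempty_of_depth hQ.2.2)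

lemma subset_not_of_same_pa (hd : 0 < d) {S Qa Qb : DyadicCube d} {n : ℕ}
    (ha : Qa ∈ lev ω w 𝒬 Q₀ S (n+1)) (hb : Qb ∈ lev ω w 𝒬 Q₀ S (n+1))
    (hpa : pa ω w 𝒬 Q₀ S Qa = pa ω w 𝒬 Q₀ S Qb) (hne : Qa ≠ Qb)
    (hsub : Qa.set ω ⊆ Qb.set ω) : False := by
  have hminA := pa_of_lev hd ha
  have hminB := pa_of_lev hd hb
  have hss : Qa.set ω ⊂ Qb.set ω :=
    ssubset_iff_subset_ne.mpr ⟨hsub, fun hs => hne (eq_of_set_eq hd ω hs)⟩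
  have h1 : (pa ω w 𝒬 Q₀ S Qa).set ω ⊆ Qb.set ω :=
    hminA.2 Qb ⟨hb.1, hss, hb.2.1⟩
  have h2 : Qb.set ω ⊂ (pa ω w 𝒬 Q₀ S Qb).set ω := hminB.1.2.1
  rw [hpa] at h1
  exact h2.not_subset h1

lemma disjoint_of_same_pa (hd : 0 < d) {S Qa Qb : DyadicCube d} {n : ℕ}
    (ha : Qa ∈ lev ω w 𝒬 Q₀ S (n+1)) (hb : Qb ∈ lev ω w 𝒬 Q₀ S (n+1))
    (hpa : pa ω w 𝒬 Q₀ S Qa = pa ω w 𝒬 Q₀ S Qb) (hne : Qa ≠ Qb) :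
    Disjoint (Qa.set ω) (Qb.set ω) := by
  by_contra hdis
  rcases subset_or_subset ω (Set.not_disjoint_iff_nonempty_inter.mp hdis) with h | h
  · exact subset_not_of_same_pa hd ha hb hpa hne h
  · exact subset_not_of_same_pa hd hb ha hpa.symm hne.symm h

lemma lev_sum_succ (hd : 0 < d) (hw : ∀ x, 0 ≤ w x) (hwl : LocallyIntegrable w volume)
    {S : DyadicCube d} (n : ℕ) :
    ∑' Q : lev ω w 𝒬 Q₀ S (n+1), Vol Q.1
      ≤ (∑' Q : lev ω w 𝒬 Q₀ S n, Vol Q.1) / 4 := by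
  set g : lev ω w 𝒬 Q₀ S (n+1) → lev ω w 𝒬 Q₀ S n := fun Q =>
    ⟨pa ω w 𝒬 Q₀ S Q.1,
      (pa_of_lev hd Q.2).1.1,
      (pa_of_lev hd Q.2).1.2.2,
      depth_pa hd Q.2.2.2⟩ with hg
  calc ∑' Q : lev ω w 𝒬 Q₀ S (n+1), Vol Q.1
      = ∑' (c : lev ω w 𝒬 Q₀ S n) (Q : g ⁻¹' {c}), Vol Q.1.1 :=
        (ENNReal.tsum_fiberwise _ g).symm
    _ ≤ ∑' c : lev ω w 𝒬 Q₀ S n, Vol c.1 / 4 := by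
        apply ENNReal.tsum_le_tsum
        intro c
        have hsub : ∀ q : ↥(g ⁻¹' {c}), (q.1.1 : DyadicCube d).set ω ⊆ (c.1).set ω := by
          intro q
          have hmin := pa_of_lev hd q.1.2
          have hc : pa ω w 𝒬 Q₀ S q.1.1 = c.1 := congrArg Subtype.val q.2
          rw [← hc]
          exact hmin.1.2.1.subset
        have hdens : ∀ q : ↥(g ⁻¹' {c}), 4 * dens ω w c.1 < dens ω w q.1.1 := by
          intro q
          have hc : pa ω w 𝒬 Q₀ S q.1.1 = c.1 := congrArg Subtype.val q.2
          rw [← hc]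
          exact dens_pa hd hw q.1.2.1 q.1.2.2.2
        have hdisj : Pairwise (Function.onFun Disjoint
            (fun q : ↥(g ⁻¹' {c}) => (q.1.1 : DyadicCube d).set ω)) := by
          intro i j hij
          have hi : pa ω w 𝒬 Q₀ S i.1.1 = c.1 := congrArg Subtype.val i.2
          have hj : pa ω w 𝒬 Q₀ S j.1.1 = c.1 := congrArg Subtype.val j.2
          have hne : i.1.1 ≠ j.1.1 := by
            intro h
            exact hij (Subtype.ext (Subtype.ext h))
          exact disjoint_of_same_pa hd i.1.2 j.1.2 (hi.trans hj.symm) hne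
        have key := sum_V_le hw hwl c.1 (fun q : ↥(g ⁻¹' {c}) => q.1.1) hsub hdens hdisj
        exact key
    _ = (∑' Q : lev ω w 𝒬 Q₀ S n, Vol Q.1) / 4 := by
        simp only [div_eq_mul_inv]
        exact ENNReal.tsum_mul_right

lemma lev_sum (hd : 0 < d) (hw : ∀ x, 0 ≤ w x) (hwl : LocallyIntegrable w volume)
    {S : DyadicCube d} (hS : S ∈ stopFam ω w 𝒬 Q₀) (n : ℕ) :
    ∑' Q : lev ω w 𝒬 Q₀ S n, Vol Q.1
      ≤ ((4:ℝ≥0∞)⁻¹) ^ n * Vol S := by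
  induction n with
  | zero =>
    simp only [pow_zero, one_mul]
    calc ∑' Q : lev ω w 𝒬 Q₀ S 0, Vol Q.1
        ≤ ∑' Q : ({S} : Set (DyadicCube d)), Vol Q.1 :=
          ENNReal.tsum_mono_subtype Vol (lev_zero hd hS)
      _ = Vol S := tsum_singleton S Vol
  | succ n ihn =>
    calc ∑' Q : lev ω w 𝒬 Q₀ S (n+1), Vol Q.1
        ≤ (∑' Q : lev ω w 𝒬 Q₀ S n, Vol Q.1) / 4 :=
          lev_sum_succ hd hw hwl n
      _ ≤ ((4:ℝ≥0∞)⁻¹ ^ n * Vol S) / 4 :=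
          ENNReal.div_le_div_right ihn 4
      _ = (4:ℝ≥0∞)⁻¹ ^ (n+1) * Vol S := by
          rw [div_eq_mul_inv, pow_succ]
          ring

lemma four_thirds : (∑' n : ℕ, ((4:ℝ≥0∞)⁻¹) ^ n) = 4/3 := by
  rw [ENNReal.tsum_geometric]
  have h2 : (3/4 : ℝ≥0∞) + 4⁻¹ = 1 := by
    rw [show ((4:ℝ≥0∞))⁻¹ = 1/4 from (one_div (4:ℝ≥0∞)).symm, ENNReal.div_add_div_same]
    norm_num
    rw [ENNReal.div_self (by norm_num) (by norm_num)]
  have h1 : (1 : ℝ≥0∞) - 4⁻¹ = 3/4 := ENNReal.sub_eq_of_eq_add (by simp) h2.symm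
  rw [h1, ENNReal.inv_div (Or.inl (by norm_num)) (Or.inl (by norm_num))]

lemma gs_sum (hd : 0 < d) (hw : ∀ x, 0 ≤ w x) (hwl : LocallyIntegrable w volume)
    {S : DyadicCube d} (hS : S ∈ stopFam ω w 𝒬 Q₀) :
    ∑' Q : {Q | Q ∈ stopFam ω w 𝒬 Q₀ ∧ Q.set ω ⊆ S.set ω}, Vol Q.1
      ≤ (4/3 : ℝ≥0∞) * Vol S := by
  have hcover : {Q | Q ∈ stopFam ω w 𝒬 Q₀ ∧ Q.set ω ⊆ S.set ω}
      = ⋃ n : ℕ, lev ω w 𝒬 Q₀ S n := by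
    ext Q
    constructor
    · rintro ⟨hG, hsub⟩
      exact Set.mem_iUnion.mpr ⟨depth ω w 𝒬 Q₀ S Q, hG, hsub, rfl⟩
    · rintro hQ
      obtain ⟨n, hG, hsub, _⟩ := Set.mem_iUnion.mp hQ
      exact ⟨hG, hsub⟩
  rw [tsum_congr_set_coe Vol hcover]
  calc ∑' Q : ⋃ n : ℕ, lev ω w 𝒬 Q₀ S n, Vol Q.1
      ≤ ∑' (n : ℕ) (Q : lev ω w 𝒬 Q₀ S n), Vol Q.1 :=
        ENNReal.tsum_iUnion_le_tsum Vol _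
    _ ≤ ∑' n : ℕ, ((4:ℝ≥0∞)⁻¹) ^ n * Vol S :=
        ENNReal.tsum_le_tsum (fun n => lev_sum hd hw hwl hS n)
    _ = (∑' n : ℕ, ((4:ℝ≥0∞)⁻¹) ^ n) * Vol S := ENNReal.tsum_mul_right
    _ = (4/3 : ℝ≥0∞) * Vol S := by rw [four_thirds]

lemma gsum_all (hd : 0 < d) (hw : ∀ x, 0 ≤ w x) (hwl : LocallyIntegrable w volume)
    (R : DyadicCube d) :
    ∑' Q : {Q | Q ∈ stopFam ω w 𝒬 Q₀ ∧ Q.set ω ⊆ R.set ω}, Vol Q.1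
      ≤ (4/3 : ℝ≥0∞) * Vol R := by
  set M := {P : DyadicCube d | (P ∈ stopFam ω w 𝒬 Q₀ ∧ P.set ω ⊆ R.set ω) ∧
    ∀ P', P' ∈ stopFam ω w 𝒬 Q₀ → P'.set ω ⊆ R.set ω → P.set ω ⊆ P'.set ω →
      P'.set ω ⊆ P.set ω} with hM
  have hcover : {Q | Q ∈ stopFam ω w 𝒬 Q₀ ∧ Q.set ω ⊆ R.set ω}
      ⊆ ⋃ P ∈ M, {Q | Q ∈ stopFam ω w 𝒬 Q₀ ∧ Q.set ω ⊆ P.set ω} := by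
    rintro Q ⟨hG, hsub⟩
    obtain ⟨P, hP1, hP2, hP3⟩ := exists_max_in hd hG hsub
    exact Set.mem_biUnion ⟨hP1, hP3⟩ ⟨hG, hP2⟩
  have hMdisj : Pairwise (Function.onFun Disjoint (fun P : M => P.1.set ω)) := by
    intro i j hij
    by_contra hdis
    have hne' : i.1 ≠ j.1 := fun h => hij (Subtype.ext h)
    rcases subset_or_subset ω (Set.not_disjoint_iff_nonempty_inter.mp hdis) with h | h
    · exact hne' (eq_of_set_eq hd ω
        (le_antisymm h (i.2.2 j.1 j.2.1.1 j.2.1.2 h)))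
    · exact hne' (eq_of_set_eq hd ω
        (le_antisymm (j.2.2 i.1 i.2.1.1 i.2.1.2 h) h))
  calc ∑' Q : {Q | Q ∈ stopFam ω w 𝒬 Q₀ ∧ Q.set ω ⊆ R.set ω}, Vol Q.1
      ≤ ∑' Q : ⋃ P ∈ M, {Q | Q ∈ stopFam ω w 𝒬 Q₀ ∧ Q.set ω ⊆ P.set ω},
          Vol Q.1 := ENNReal.tsum_mono_subtype Vol hcover
    _ ≤ ∑' (P : M) (Q : {Q | Q ∈ stopFam ω w 𝒬 Q₀ ∧ Q.set ω ⊆ P.1.set ω}),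
          Vol Q.1 := ENNReal.tsum_biUnion_le_tsum Vol _ _
    _ ≤ ∑' P : M, (4/3 : ℝ≥0∞) * Vol P.1 :=
        ENNReal.tsum_le_tsum (fun P => gs_sum hd hw hwl P.2.1.1)
    _ = (4/3 : ℝ≥0∞) * ∑' P : M, Vol P.1 := ENNReal.tsum_mul_left
    _ ≤ (4/3 : ℝ≥0∞) * Vol R := by
        apply mul_le_mul_right
        calc ∑' P : M, Vol P.1 = ∑' P : M, volume (P.1.set ω) :=
              tsum_congr (fun P => (volume_set ω P.1).symm)
          _ = volume (⋃ P : M, P.1.set ω) :=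
              (measure_iUnion hMdisj (fun P => measurableSet_set ω P.1)).symm
          _ ≤ volume (R.set ω) := measure_mono (Set.iUnion_subset (fun P => P.2.1.2))
          _ = Vol R := volume_set ω R

lemma ite_inner (hd : 0 < d) (hw : ∀ x, 0 ≤ w x) (hwl : LocallyIntegrable w volume)
    {R : DyadicCube d} (b : DyadicCube d) (hbG : b ∈ stopFam ω w 𝒬 Q₀) :
    ∑' a : {Q | Q ∈ stopFam ω w 𝒬 Q₀ ∧ Q.set ω ⊆ R.set ω},
      (if a.1.set ω ⊆ b.set ω then Vol a.1 else 0)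
      ≤ (4/3 : ℝ≥0∞) * Vol b := by
  set s := {Q | Q ∈ stopFam ω w 𝒬 Q₀ ∧ Q.set ω ⊆ R.set ω} with hs
  set t := {Q : DyadicCube d | Q.set ω ⊆ b.set ω} with ht
  have hsubs : s ∩ t ⊆ {Q | Q ∈ stopFam ω w 𝒬 Q₀ ∧ Q.set ω ⊆ b.set ω} := by
    rintro Q ⟨hQ1, hQ2⟩
    exact ⟨hQ1.1, hQ2⟩
  calc ∑' a : s, (if a.1.set ω ⊆ b.set ω then Vol a.1 else 0)
      = ∑' a : s, Set.indicator t Vol a.1 := by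
        apply tsum_congr
        intro a
        rw [Set.indicator_apply]
        rfl
    _ = ∑' Q : DyadicCube d, Set.indicator s (Set.indicator t Vol) Q :=
        tsum_subtype s _
    _ = ∑' Q : DyadicCube d, Set.indicator (s ∩ t) Vol Q := by
        simp only [Set.indicator_indicator]
    _ = ∑' Q : ↥(s ∩ t), Vol Q.1 := (tsum_subtype _ _).symm
    _ ≤ ∑' Q : {Q | Q ∈ stopFam ω w 𝒬 Q₀ ∧ Q.set ω ⊆ b.set ω}, Vol Q.1 :=
        ENNReal.tsum_mono_subtype Vol hsubs
    _ ≤ (4/3 : ℝ≥0∞) * Vol b := gs_sum hd hw hwl hbG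

end Sums

end Stmt6Aux


/-- **Carleson packing of the stopping cubes.** For the stopping family
`𝒢* = 𝒢*(Q₀)`: (i) `Σ_{Q∈𝒢*, Q⊆R} |Q| ≤ (4/3)|R|` for every `R ∈ 𝒟` (in particular for
every `R ∈ 𝒢*`); (ii) `‖Σ_{Q∈𝒢*, Q⊆R} 1_Q‖_{L²} ≤ 2|R|^{1/2}` for every `R ∈ 𝒢*`. -/
theorem statement6 (d : ℕ) (hd : 0 < d) (ω : TransParam d)
    (w : (Fin d → ℝ) → ℝ) (hw : ∀ x, 0 ≤ w x) (hwl : LocallyIntegrable w volume)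
    (𝒬 : Set (DyadicCube d)) (Q₀ : DyadicCube d) (hQ₀ : Q₀ ∈ 𝒬) :
    (∀ R : DyadicCube d,
      (∑' Q : {Q : DyadicCube d // Q ∈ stopFam ω w 𝒬 Q₀ ∧ Q.set ω ⊆ R.set ω},
        ENNReal.ofReal (DyadicCube.vol Q.1)) ≤ ENNReal.ofReal ((4 / 3) * R.vol)) ∧
    (∀ R ∈ stopFam ω w 𝒬 Q₀,
      (∫⁻ x, (∑' Q : {Q : DyadicCube d // Q ∈ stopFam ω w 𝒬 Q₀ ∧ Q.set ω ⊆ R.set ω},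
          Set.indicator ((Q.1).set ω) (fun _ => (1:ℝ≥0∞)) x) ^ 2) ≤
        ENNReal.ofReal (4 * R.vol)) := by
  have h43 : (4/3 : ℝ≥0∞) = ENNReal.ofReal ((4:ℝ)/3) := by
    rw [ENNReal.ofReal_div_of_pos (by norm_num)]
    norm_num
  constructor
  · -- part (i)
    intro R
    have h := Stmt6Aux.gsum_all (ω := ω) (w := w) (𝒬 := 𝒬) (Q₀ := Q₀) hd hw hwl R
    have hconv : ENNReal.ofReal ((4/3) * R.vol) = (4/3 : ℝ≥0∞) * ENNReal.ofReal R.vol := by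
      rw [ENNReal.ofReal_mul (by norm_num), h43]
    rw [hconv]
    exact h
  · -- part (ii)
    intro R hR
    set T := {Q : DyadicCube d | Q ∈ stopFam ω w 𝒬 Q₀ ∧ Q.set ω ⊆ R.set ω} with hT
    set F : ↥T → (Fin d → ℝ) → ℝ≥0∞ :=
      fun Q => Set.indicator ((Q.1).set ω) (fun _ => (1:ℝ≥0∞)) with hF
    have hmeas : ∀ a : ↥T, Measurable (F a) :=
      fun a => measurable_const.indicator (Stmt6Aux.measurableSet_set ω a.1)
    have hpt : ∀ x, (∑' Q : ↥T, F Q x) ^ 2 = ∑' (a : ↥T) (b : ↥T), F a x * F b x := by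
      intro x
      rw [pow_two]
      calc (∑' a : ↥T, F a x) * (∑' b : ↥T, F b x)
          = ∑' a : ↥T, F a x * (∑' b : ↥T, F b x) := ENNReal.tsum_mul_right.symm
        _ = ∑' (a : ↥T) (b : ↥T), F a x * F b x :=
            tsum_congr (fun a => ENNReal.tsum_mul_left.symm)
    have hC : ∀ a b : ↥T, (∫⁻ x, F a x * F b x)
        = volume ((a.1).set ω ∩ (b.1).set ω) := by
      intro a b
      have hprod : ∀ x, F a x * F b x
          = Set.indicator ((a.1).set ω ∩ (b.1).set ω) (fun _ => (1:ℝ≥0∞)) x := by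
        intro x
        rw [hF]
        simp only [← Set.inter_indicator_mul, one_mul]
      calc (∫⁻ x, F a x * F b x)
          = ∫⁻ x, Set.indicator ((a.1).set ω ∩ (b.1).set ω) (fun _ => (1:ℝ≥0∞)) x :=
            lintegral_congr hprod
        _ = volume ((a.1).set ω ∩ (b.1).set ω) := by
            rw [lintegral_indicator
              ((Stmt6Aux.measurableSet_set ω a.1).inter (Stmt6Aux.measurableSet_set ω b.1))]
            exact setLIntegral_one _
    have hD : ∀ a b : ↥T, volume ((a.1).set ω ∩ (b.1).set ω)
        ≤ (if (a.1).set ω ⊆ (b.1).set ω then Stmt6Aux.Vol a.1 else 0)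
          + (if (b.1).set ω ⊆ (a.1).set ω then Stmt6Aux.Vol b.1 else 0) := by
      intro a b
      by_cases h1 : (a.1).set ω ⊆ (b.1).set ω
      · rw [if_pos h1]
        refine le_trans ?_ le_self_add
        rw [Stmt6Aux.Vol, ← Stmt6Aux.volume_set ω a.1]
        exact measure_mono Set.inter_subset_left
      · by_cases h2 : (b.1).set ω ⊆ (a.1).set ω
        · rw [if_neg h1, if_pos h2, zero_add]
          rw [Stmt6Aux.Vol, ← Stmt6Aux.volume_set ω b.1]
          exact measure_mono Set.inter_subset_right
        · rw [if_neg h1, if_neg h2, add_zero]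
          have hem : (a.1).set ω ∩ (b.1).set ω = ∅ := by
            by_contra hne
            rcases Stmt6Aux.subset_or_subset ω (Set.nonempty_iff_ne_empty.mpr hne) with h | h
            exacts [h1 h, h2 h]
          rw [hem]
          simp
    have hstep1 : (∫⁻ x, (∑' Q : ↥T, F Q x) ^ 2)
        = ∑' (a : ↥T) (b : ↥T), volume ((a.1).set ω ∩ (b.1).set ω) := by
      calc (∫⁻ x, (∑' Q : ↥T, F Q x) ^ 2)
          = ∫⁻ x, ∑' (a : ↥T) (b : ↥T), F a x * F b x := lintegral_congr hpt
        _ = ∑' a : ↥T, ∫⁻ x, ∑' b : ↥T, F a x * F b x :=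
            lintegral_tsum (fun a => (Measurable.ennreal_tsum
              (fun b => (hmeas a).mul (hmeas b))).aemeasurable)
        _ = ∑' (a : ↥T) (b : ↥T), ∫⁻ x, F a x * F b x :=
            tsum_congr (fun a => lintegral_tsum
              (fun b => ((hmeas a).mul (hmeas b)).aemeasurable))
        _ = ∑' (a : ↥T) (b : ↥T), volume ((a.1).set ω ∩ (b.1).set ω) :=
            tsum_congr (fun a => tsum_congr (fun b => hC a b))
    have hVR : ∑' a : ↥T, Stmt6Aux.Vol a.1 ≤ (4/3 : ℝ≥0∞) * Stmt6Aux.Vol R :=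
      Stmt6Aux.gsum_all hd hw hwl R
    have h2bound : (4/3:ℝ≥0∞) * ((4/3:ℝ≥0∞) * Stmt6Aux.Vol R) ≤ 2 * Stmt6Aux.Vol R := by
      rw [← mul_assoc]
      apply mul_le_mul_left
      rw [h43, ← ENNReal.ofReal_mul (by norm_num)]
      calc ENNReal.ofReal ((4:ℝ)/3 * (4/3)) ≤ ENNReal.ofReal 2 :=
            ENNReal.ofReal_le_ofReal (by norm_num)
        _ = 2 := by simp
    have hD1 : ∑' (a : ↥T) (b : ↥T),
        (if (a.1).set ω ⊆ (b.1).set ω then Stmt6Aux.Vol a.1 else 0)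
        ≤ 2 * Stmt6Aux.Vol R := by
      rw [ENNReal.tsum_comm]
      calc ∑' (b : ↥T) (a : ↥T), (if (a.1).set ω ⊆ (b.1).set ω then Stmt6Aux.Vol a.1 else 0)
          ≤ ∑' b : ↥T, (4/3 : ℝ≥0∞) * Stmt6Aux.Vol b.1 :=
            ENNReal.tsum_le_tsum (fun b => Stmt6Aux.ite_inner hd hw hwl b.1 b.2.1)
        _ = (4/3 : ℝ≥0∞) * ∑' b : ↥T, Stmt6Aux.Vol b.1 := ENNReal.tsum_mul_left
        _ ≤ (4/3 : ℝ≥0∞) * ((4/3 : ℝ≥0∞) * Stmt6Aux.Vol R) := mul_le_mul_right hVR _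
        _ ≤ 2 * Stmt6Aux.Vol R := h2bound
    have hD2 : ∑' (a : ↥T) (b : ↥T),
        (if (b.1).set ω ⊆ (a.1).set ω then Stmt6Aux.Vol b.1 else 0)
        ≤ 2 * Stmt6Aux.Vol R := by
      calc ∑' (a : ↥T) (b : ↥T), (if (b.1).set ω ⊆ (a.1).set ω then Stmt6Aux.Vol b.1 else 0)
          ≤ ∑' a : ↥T, (4/3 : ℝ≥0∞) * Stmt6Aux.Vol a.1 :=
            ENNReal.tsum_le_tsum (fun a => Stmt6Aux.ite_inner hd hw hwl a.1 a.2.1)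
        _ = (4/3 : ℝ≥0∞) * ∑' a : ↥T, Stmt6Aux.Vol a.1 := ENNReal.tsum_mul_left
        _ ≤ (4/3 : ℝ≥0∞) * ((4/3 : ℝ≥0∞) * Stmt6Aux.Vol R) := mul_le_mul_right hVR _
        _ ≤ 2 * Stmt6Aux.Vol R := h2bound
    show (∫⁻ x, (∑' Q : ↥T, F Q x) ^ 2) ≤ ENNReal.ofReal (4 * R.vol)
    calc (∫⁻ x, (∑' Q : ↥T, F Q x) ^ 2)
        = ∑' (a : ↥T) (b : ↥T), volume ((a.1).set ω ∩ (b.1).set ω) := hstep1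
      _ ≤ ∑' (a : ↥T) (b : ↥T),
            ((if (a.1).set ω ⊆ (b.1).set ω then Stmt6Aux.Vol a.1 else 0)
              + (if (b.1).set ω ⊆ (a.1).set ω then Stmt6Aux.Vol b.1 else 0)) :=
          ENNReal.tsum_le_tsum (fun a => ENNReal.tsum_le_tsum (fun b => hD a b))
      _ = (∑' (a : ↥T) (b : ↥T), (if (a.1).set ω ⊆ (b.1).set ω then Stmt6Aux.Vol a.1 else 0))
          + ∑' (a : ↥T) (b : ↥T), (if (b.1).set ω ⊆ (a.1).set ω then Stmt6Aux.Vol b.1 else 0) := by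
          simp only [ENNReal.tsum_add]
      _ ≤ 2 * Stmt6Aux.Vol R + 2 * Stmt6Aux.Vol R := add_le_add hD1 hD2
      _ = 4 * Stmt6Aux.Vol R := by ring
      _ = ENNReal.ofReal (4 * R.vol) := by
          rw [ENNReal.ofReal_mul (by norm_num)]
          simp [Stmt6Aux.Vol]


end
end
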